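/- arXiv:1508.05890 — 5 statements merged into one kernel-verified Lean document; each statement's English description precedes it below -/
import Mathlib

section
/- Define the generalized geometric sum coefficients χ_n(p, ℓ) by χ_n(0, ℓ) = 1 if ℓ = 0 and 0 otherwise, and χ_n(p+1, ℓ) = (n + ℓ)·χ_n(p, ℓ) + ℓ·χ_n(p, ℓ - 1). Then for complex δ with e^δ ≠ 1 and any p ∈ ℕ, the p-th derivative of δ ↦ e^{nδ}/(1 - e^δ) equals ∑_{ℓ=0}^{p} χ_n(p, ℓ)·e^{(n+ℓ)δ}/(1 - e^δ)^{ℓ+1}. -/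
open Complex Finset

/-- The generalized geometric sum coefficients `χ_n(p, ℓ)`. -/
def chi (n : ℕ) : ℕ → ℕ → ℕ
  | 0, ℓ => if ℓ = 0 then 1 else 0
  | p + 1, ℓ => (n + ℓ) * chi n p ℓ + ℓ * chi n p (ℓ - 1)

lemma chi_eq_zero (n : ℕ) : ∀ p ℓ, p < ℓ → chi n p ℓ = 0 := by
  intro p
  induction p with
  | zero =>
      intro ℓ h
      have : ℓ ≠ 0 := by omega
      simp [chi, this]
  | succ p ih =>
      intro ℓ h
      have h1 : p < ℓ := by omega
      have h2 : p < ℓ - 1 := by omega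
      simp [chi, ih ℓ h1, ih (ℓ - 1) h2]

lemma term_hasDerivAt (c a : ℂ) (k : ℕ) (z : ℂ) (hz : Complex.exp z ≠ 1) :
    HasDerivAt (fun w : ℂ => c * Complex.exp (a * w) / (1 - Complex.exp w) ^ (k + 1))
      (c * a * Complex.exp (a * z) / (1 - Complex.exp z) ^ (k + 1)
        + c * (k + 1) * Complex.exp ((a + 1) * z) / (1 - Complex.exp z) ^ (k + 2)) z := by
  have hne : (1 - Complex.exp z) ≠ 0 := by
    intro h; apply hz; linear_combination -h
  have h1 : HasDerivAt (fun w : ℂ => c * Complex.exp (a * w))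
      (c * (Complex.exp (a * z) * a)) z := by
    have := (((hasDerivAt_id z).const_mul a).cexp).const_mul c
    simpa using this
  have h2 : HasDerivAt (fun w : ℂ => (1 - Complex.exp w) ^ (k + 1))
      (((k : ℂ) + 1) * (1 - Complex.exp z) ^ k * (-Complex.exp z)) z := by
    have := ((hasDerivAt_const z (1 : ℂ)).fun_sub (Complex.hasDerivAt_exp z)).fun_pow (k + 1)
    simpa using this
  have := h1.fun_div h2 (pow_ne_zero _ hne)
  refine this.congr_deriv ?_
  have hexp : Complex.exp ((a + 1) * z) = Complex.exp (a * z) * Complex.exp z := by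
    rw [← Complex.exp_add]; ring_nf
  rw [hexp]
  field_simp
  ring

theorem iteratedDeriv_geom_ratio (n : ℕ) (p : ℕ) (δ : ℂ) (hδ : Complex.exp δ ≠ 1) :
    iteratedDeriv p (fun z : ℂ => Complex.exp ((n : ℂ) * z) / (1 - Complex.exp z)) δ =
      ∑ ℓ ∈ Finset.range (p + 1),
        (chi n p ℓ : ℂ) * Complex.exp (((n : ℂ) + ℓ) * δ) / (1 - Complex.exp δ) ^ (ℓ + 1) := by
  induction p generalizing δ with
  | zero => simp [chi]
  | succ p ih =>
      rw [iteratedDeriv_succ]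
      have hU : IsOpen {z : ℂ | Complex.exp z ≠ 1} :=
        isOpen_ne.preimage Complex.continuous_exp
      have hev : iteratedDeriv p (fun z : ℂ => Complex.exp ((n : ℂ) * z) / (1 - Complex.exp z))
          =ᶠ[nhds δ] fun z => ∑ ℓ ∈ Finset.range (p + 1),
            (chi n p ℓ : ℂ) * Complex.exp (((n : ℂ) + ℓ) * z) / (1 - Complex.exp z) ^ (ℓ + 1) :=
        Filter.eventuallyEq_of_mem (hU.mem_nhds hδ) (fun z hz => ih z hz)
      rw [hev.deriv_eq]
      have hd : HasDerivAt (fun z => ∑ ℓ ∈ Finset.range (p + 1),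
            (chi n p ℓ : ℂ) * Complex.exp (((n : ℂ) + ℓ) * z) / (1 - Complex.exp z) ^ (ℓ + 1))
          (∑ ℓ ∈ Finset.range (p + 1),
            ((chi n p ℓ : ℂ) * ((n : ℂ) + ℓ) * Complex.exp (((n : ℂ) + ℓ) * δ)
                / (1 - Complex.exp δ) ^ (ℓ + 1)
              + (chi n p ℓ : ℂ) * ((ℓ : ℂ) + 1) * Complex.exp ((((n : ℂ) + ℓ) + 1) * δ)
                / (1 - Complex.exp δ) ^ (ℓ + 2))) δ := by
        apply HasDerivAt.fun_sum
        intro ℓ _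
        simpa using term_hasDerivAt (chi n p ℓ : ℂ) ((n : ℂ) + ℓ) ℓ δ hδ
      rw [hd.deriv, Finset.sum_add_distrib]
      have hrhs : ∀ ℓ ∈ Finset.range (p + 2),
          (chi n (p + 1) ℓ : ℂ) * Complex.exp (((n : ℂ) + ℓ) * δ) / (1 - Complex.exp δ) ^ (ℓ + 1)
          = ((n : ℂ) + ℓ) * (chi n p ℓ : ℂ) * Complex.exp (((n : ℂ) + ℓ) * δ)
              / (1 - Complex.exp δ) ^ (ℓ + 1)
            + (ℓ : ℂ) * (chi n p (ℓ - 1) : ℂ) * Complex.exp (((n : ℂ) + ℓ) * δ)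
              / (1 - Complex.exp δ) ^ (ℓ + 1) := by
        intro ℓ _
        show ((((n + ℓ) * chi n p ℓ + ℓ * chi n p (ℓ - 1) : ℕ)) : ℂ) * _ / _ = _
        push_cast
        ring
      rw [Finset.sum_congr rfl hrhs, Finset.sum_add_distrib]
      congr 1
      · conv_rhs => rw [Finset.sum_range_succ]
        rw [chi_eq_zero n p (p + 1) (by omega)]
        simp only [Nat.cast_zero, mul_zero, zero_mul, zero_div, add_zero]
        exact Finset.sum_congr rfl fun ℓ _ => by ring
      · conv_rhs => rw [Finset.sum_range_succ']
        simp only [Nat.cast_zero, zero_mul, zero_div, add_zero]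
        refine Finset.sum_congr rfl fun ℓ _ => ?_
        have harg : ((n : ℂ) + (↑(ℓ + 1))) = (((n : ℂ) + ℓ) + 1) := by push_cast; ring
        rw [harg]
        simp only [Nat.add_sub_cancel]
        push_cast
        ring
end

section
/- For complex δ with e^δ ≠ 1, integers 0 ≤ n1 ≤ n2, and p ∈ ℕ, the generalized geometric sum ∑_{k=n1}^{n2-1} k^p·e^{δk} equals ∑_{ℓ=0}^{p} [χ_{n1}(p,ℓ)·e^{(n1+ℓ)δ} - χ_{n2}(p,ℓ)·e^{(n2+ℓ)δ}]/(1 - e^δ)^{ℓ+1}, where χ_n(p,ℓ) satisfies χ_n(0,ℓ) = δ_{ℓ,0} and χ_n(p+1,ℓ) = (n+ℓ)·χ_n(p,ℓ) + ℓ·χ_n(p,ℓ-1). -/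
open Complex Finset

noncomputable def Sgeo (n p : ℕ) (δ : ℂ) : ℂ :=
  ∑ ℓ ∈ Finset.range (p + 1),
    (chi n p ℓ : ℂ) * Complex.exp (((n : ℂ) + ℓ) * δ) / (1 - Complex.exp δ) ^ (ℓ + 1)

lemma hasDerivAt_Sgeo (n p : ℕ) (δ : ℂ) (hδ : Complex.exp δ ≠ 1) :
    HasDerivAt (Sgeo n p) (Sgeo n (p + 1) δ) δ := by
  have hd : (1 - Complex.exp δ) ≠ 0 := sub_ne_zero.mpr (Ne.symm hδ)
  have key : ∀ ℓ : ℕ, HasDerivAt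
      (fun z => (chi n p ℓ : ℂ) * Complex.exp (((n : ℂ) + ℓ) * z) / (1 - Complex.exp z) ^ (ℓ + 1))
      (((n : ℂ) + ℓ) * (chi n p ℓ : ℂ) * Complex.exp (((n : ℂ) + ℓ) * δ) / (1 - Complex.exp δ) ^ (ℓ + 1)
        + ((ℓ : ℂ) + 1) * (chi n p ℓ : ℂ) * Complex.exp (((n : ℂ) + (ℓ + 1)) * δ) / (1 - Complex.exp δ) ^ (ℓ + 2)) δ := by
    intro ℓ
    have hN : HasDerivAt (fun z => (chi n p ℓ : ℂ) * Complex.exp (((n : ℂ) + ℓ) * z))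
        ((chi n p ℓ : ℂ) * (Complex.exp (((n : ℂ) + ℓ) * δ) * (((n : ℂ) + ℓ) * 1))) δ :=
      (((hasDerivAt_id δ).const_mul ((n : ℂ) + ℓ)).cexp).const_mul _
    have hD : HasDerivAt (fun z => (1 - Complex.exp z) ^ (ℓ + 1))
        ((ℓ + 1 : ℕ) * (1 - Complex.exp δ) ^ ℓ * (-Complex.exp δ)) δ := by
      have h1 : HasDerivAt (fun z => 1 - Complex.exp z) (-Complex.exp δ) δ :=
        (Complex.hasDerivAt_exp δ).const_sub 1
      have := h1.fun_pow (ℓ + 1)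
      simpa using this
    have h := hN.fun_div hD (pow_ne_zero _ hd)
    refine h.congr_deriv ?_
    have he : Complex.exp (((n : ℂ) + (ℓ + 1)) * δ) = Complex.exp (((n : ℂ) + ℓ) * δ) * Complex.exp δ := by
      rw [← Complex.exp_add]; ring_nf
    rw [he]
    field_simp
    push_cast
    ring
  have hsum : HasDerivAt (Sgeo n p)
      (∑ ℓ ∈ Finset.range (p + 1),
        (((n : ℂ) + ℓ) * (chi n p ℓ : ℂ) * Complex.exp (((n : ℂ) + ℓ) * δ) / (1 - Complex.exp δ) ^ (ℓ + 1)
          + ((ℓ : ℂ) + 1) * (chi n p ℓ : ℂ) * Complex.exp (((n : ℂ) + (ℓ + 1)) * δ) / (1 - Complex.exp δ) ^ (ℓ + 2))) δ := by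
    exact HasDerivAt.fun_sum (fun ℓ _ => key ℓ)
  convert hsum using 1
  rw [Finset.sum_add_distrib]
  unfold Sgeo
  have hrec : ∀ ℓ ∈ Finset.range (p + 2),
      (chi n (p + 1) ℓ : ℂ) * Complex.exp (((n : ℂ) + ℓ) * δ) / (1 - Complex.exp δ) ^ (ℓ + 1) =
      ((n : ℂ) + ℓ) * (chi n p ℓ : ℂ) * Complex.exp (((n : ℂ) + ℓ) * δ) / (1 - Complex.exp δ) ^ (ℓ + 1)
        + (ℓ : ℂ) * (chi n p (ℓ - 1) : ℂ) * Complex.exp (((n : ℂ) + ℓ) * δ) / (1 - Complex.exp δ) ^ (ℓ + 1) := by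
    intro ℓ _
    rw [show chi n (p + 1) ℓ = (n + ℓ) * chi n p ℓ + ℓ * chi n p (ℓ - 1) from rfl]
    push_cast
    ring
  rw [Finset.sum_congr rfl hrec, Finset.sum_add_distrib]
  congr 1
  · -- first sum: drop the top (ℓ = p+1) term which vanishes
    rw [Finset.sum_range_succ, chi_eq_zero n p (p + 1) (by omega)]
    simp
  · -- second sum: reindex
    rw [Finset.sum_range_succ']
    simp only [Nat.cast_zero, zero_mul, zero_div, add_zero]
    apply Finset.sum_congr rfl
    intro ℓ _
    push_cast
    ring_nf

lemma Sgeo_diff (p : ℕ) : ∀ (n : ℕ) (δ : ℂ), Complex.exp δ ≠ 1 →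
    Sgeo n p δ - Sgeo (n + 1) p δ = (n : ℂ) ^ p * Complex.exp ((n : ℂ) * δ) := by
  induction p with
  | zero =>
    intro n δ hδ
    have hd : (1 - Complex.exp δ) ≠ 0 := sub_ne_zero.mpr (Ne.symm hδ)
    simp only [Sgeo, zero_add, Finset.sum_range_one, Nat.cast_zero, add_zero, pow_one]
    norm_num [chi]
    have he : Complex.exp (((n : ℂ) + 1) * δ) = Complex.exp ((n : ℂ) * δ) * Complex.exp δ := by
      rw [← Complex.exp_add]; ring_nf
    rw [he]
    field_simp
  | succ p ih =>
    intro n δ hδ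
    have hU : IsOpen {z : ℂ | Complex.exp z ≠ 1} :=
      isOpen_compl_singleton.preimage Complex.continuous_exp
    have heq : (fun z => Sgeo n p z - Sgeo (n + 1) p z) =ᶠ[nhds δ]
        (fun z => (n : ℂ) ^ p * Complex.exp ((n : ℂ) * z)) :=
      Filter.eventuallyEq_of_mem (hU.mem_nhds hδ) (fun z hz => ih n z hz)
    have hg : HasDerivAt (fun z => (n : ℂ) ^ p * Complex.exp ((n : ℂ) * z))
        ((n : ℂ) ^ p * (Complex.exp ((n : ℂ) * δ) * ((n : ℂ) * 1))) δ :=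
      (((hasDerivAt_id δ).const_mul (n : ℂ)).cexp).const_mul _
    have hf : HasDerivAt (fun z => Sgeo n p z - Sgeo (n + 1) p z)
        (Sgeo n (p + 1) δ - Sgeo (n + 1) (p + 1) δ) δ :=
      (hasDerivAt_Sgeo n p δ hδ).sub (hasDerivAt_Sgeo (n + 1) p δ hδ)
    have hg' : HasDerivAt (fun z => Sgeo n p z - Sgeo (n + 1) p z)
        ((n : ℂ) ^ p * (Complex.exp ((n : ℂ) * δ) * ((n : ℂ) * 1))) δ :=
      hg.congr_of_eventuallyEq heq
    rw [hf.unique hg']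
    ring

theorem generalized_geometric_sum_formula (δ : ℂ) (hδ : Complex.exp δ ≠ 1)
    (n1 n2 p : ℕ) (h : n1 ≤ n2) :
    ∑ k ∈ Finset.Ico n1 n2, (k : ℂ) ^ p * Complex.exp (δ * k) =
      ∑ ℓ ∈ Finset.range (p + 1),
        ((chi n1 p ℓ : ℂ) * Complex.exp (((n1 : ℂ) + ℓ) * δ) -
          (chi n2 p ℓ : ℂ) * Complex.exp (((n2 : ℂ) + ℓ) * δ)) /
            (1 - Complex.exp δ) ^ (ℓ + 1) := by
  have hform : ∀ a b : ℕ,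
      (∑ ℓ ∈ Finset.range (p + 1),
        ((chi a p ℓ : ℂ) * Complex.exp (((a : ℂ) + ℓ) * δ) -
          (chi b p ℓ : ℂ) * Complex.exp (((b : ℂ) + ℓ) * δ)) /
            (1 - Complex.exp δ) ^ (ℓ + 1)) = Sgeo a p δ - Sgeo b p δ := by
    intro a b
    rw [Sgeo, Sgeo, ← Finset.sum_sub_distrib]
    apply Finset.sum_congr rfl
    intro ℓ _
    rw [sub_div]
  rw [hform]
  induction n2, h using Nat.le_induction with
  | base => simp
  | succ m hm ihm =>
    rw [Finset.sum_Ico_succ_top hm, ihm]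
    have := Sgeo_diff p m δ hδ
    rw [mul_comm δ (m : ℂ)]
    linear_combination (-1 : ℂ) * this
end

section
/- Let W have orthonormal columns spanning subspace W and let Q = [Q₁ Q₂] ∈ ℂ^{n×(q₁+q₂)} have orthonormal columns, with J = range(Q) and J₁ = range(Q₁). Then ∏_{k=1}^{q₁+q₂} σ_k(W*Q)² ≤ ∏_{k=1}^{q₁} σ_k(W*Q₁)², i.e., η(W, J) ≤ η(W, J₁). -/
open Matrix
open scoped ComplexOrder

lemma herm_det_eq {k : Type*} [Fintype k] [DecidableEq k] {M : Matrix k k ℂ}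
    (hM : M.IsHermitian) : M.det = ((∏ i, hM.eigenvalues i : ℝ) : ℂ) := by
  rw [hM.det_eq_prod_eigenvalues]; push_cast; rfl

lemma eig_le_one {k : Type*} [Fintype k] [DecidableEq k] {M : Matrix k k ℂ}
    (hM : M.IsHermitian) (h1 : (1 - M).PosSemidef) (i : k) : hM.eigenvalues i ≤ 1 := by
  have hv := hM.eigenvalues_eq i
  set v := ⇑(hM.eigenvectorBasis i) with hvdef
  have h := h1.dotProduct_mulVec_nonneg v
  have hre : 0 ≤ (dotProduct (star v) ((1 - M) *ᵥ v)).re := by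
    rw [Complex.le_def] at h; simpa using h.1
  have hexp : dotProduct (star v) ((1 - M) *ᵥ v)
      = dotProduct (star v) v - dotProduct (star v) (M *ᵥ v) := by
    rw [sub_mulVec, dotProduct_sub, one_mulVec]
  have hvv : dotProduct (star v) v = 1 := by
    have := hM.eigenvectorBasis.orthonormal.1 i
    rw [hvdef, dotProduct_comm, ← EuclideanSpace.inner_eq_star_dotProduct, inner_self_eq_norm_sq_to_K, this]
    norm_num
  rw [hexp, hvv] at hre
  simp only [Complex.sub_re, Complex.one_re] at hre
  rw [hv, RCLike.re_to_complex]; linarith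

/-- PSD det as real is nonneg, and for PSD contraction it's ≤ 1. -/
lemma psd_det_re_nonneg {k : Type*} [Fintype k] [DecidableEq k] {M : Matrix k k ℂ}
    (hM : M.PosSemidef) : 0 ≤ M.det.re := by
  rw [herm_det_eq hM.1, Complex.ofReal_re]
  exact Finset.prod_nonneg fun i _ => hM.eigenvalues_nonneg i

lemma psd_det_re_le_one {k : Type*} [Fintype k] [DecidableEq k] {M : Matrix k k ℂ}
    (hM : M.PosSemidef) (h1 : (1 - M).PosSemidef) : M.det.re ≤ 1 := by
  rw [herm_det_eq hM.1, Complex.ofReal_re]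
  exact Finset.prod_le_one (fun i _ => hM.eigenvalues_nonneg i)
    (fun i _ => eig_le_one hM.1 h1 i)

/-- Fischer-type inequality: determinant of PSD contraction bounded by principal block det. -/
lemma det_re_le_block {p q : ℕ} (A : Matrix (Fin p ⊕ Fin q) (Fin p ⊕ Fin q) ℂ)
    (hA : A.PosSemidef) (h1 : (1 - A).PosSemidef) :
    A.det.re ≤ A.toBlocks₁₁.det.re := by
  have hB : A.toBlocks₁₁.PosSemidef := hA.submatrix Sum.inl
  by_cases hdet : A.toBlocks₁₁.det = 0
  · rw [hdet]
    simp only [Complex.zero_re]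
    obtain ⟨x, hx, hBx⟩ := (Matrix.exists_mulVec_eq_zero_iff).2 hdet
    set y : (Fin p ⊕ Fin q) → ℂ := Sum.elim x 0 with hy
    have hy0 : y ≠ 0 := by
      obtain ⟨i, hi⟩ := Function.ne_iff.1 hx
      exact Function.ne_iff.2 ⟨Sum.inl i, by simpa [hy] using hi⟩
    have hquad : dotProduct (star y) (A *ᵥ y) = 0 := by
      have hAyl : ∀ i, (A *ᵥ y) (Sum.inl i) = 0 := by
        intro i
        have := congr_fun hBx i
        simpa [mulVec, dotProduct, hy, Fintype.sum_sum_type, toBlocks₁₁] using this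
      rw [dotProduct]
      rw [Fintype.sum_sum_type]
      simp [hy, hAyl]
      rw [← hy]; simp [hAyl]
    have hAy : A *ᵥ y = 0 := (hA.dotProduct_mulVec_zero_iff y).1 hquad
    have : A.det = 0 := (Matrix.exists_mulVec_eq_zero_iff).1 ⟨y, hy0, hAy⟩
    rw [this]; simp
  · -- B positive definite
    have hBpd : A.toBlocks₁₁.PosDef := by
      refine Matrix.PosDef.of_dotProduct_mulVec_pos hB.1 fun x hx => lt_of_le_of_ne (hB.dotProduct_mulVec_nonneg x) fun h0 => ?_
      exact hdet ((Matrix.exists_mulVec_eq_zero_iff).1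
        ⟨x, hx, (hB.dotProduct_mulVec_zero_iff x).1 h0.symm⟩)
    haveI : Invertible A.toBlocks₁₁ := A.toBlocks₁₁.invertibleOfIsUnitDet (Ne.isUnit hdet)
    set B := A.toBlocks₁₁
    set C := A.toBlocks₁₂
    set D := A.toBlocks₂₂
    have h21 : A.toBlocks₂₁ = Cᴴ := by
      ext i j
      have := congr_fun (congr_fun hA.1 (Sum.inr i)) (Sum.inl j)
      simpa [toBlocks₂₁, conjTranspose_apply, C, toBlocks₁₂] using this.symm
    have hAeq : A = fromBlocks B C Cᴴ D := by
      rw [← fromBlocks_toBlocks A, h21]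
    set S := D - Cᴴ * B⁻¹ * C with hS
    have hdetA : A.det = B.det * S.det := by
      rw [hAeq, det_fromBlocks₁₁, invOf_eq_nonsing_inv]
    have hSpsd : S.PosSemidef := (PosDef.fromBlocks₁₁ C D hBpd).1 (hAeq ▸ hA)
    have hS1 : (1 - S).PosSemidef := by
      have h1D : (1 - D).PosSemidef := by
        have := h1.submatrix Sum.inr
        convert this using 1
        ext i j
        simp [one_apply, D, toBlocks₂₂]
      have hCC : (Cᴴ * B⁻¹ * C).PosSemidef :=
        hBpd.inv.posSemidef.conjTranspose_mul_mul_same C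
      have : (1 : Matrix (Fin q) (Fin q) ℂ) - S = (1 - D) + Cᴴ * B⁻¹ * C := by
        rw [hS]; abel
      rw [this]
      exact h1D.add hCC
    have hdS1 : S.det.re ≤ 1 := psd_det_re_le_one hSpsd hS1
    have hdS0 : 0 ≤ S.det.re := psd_det_re_nonneg hSpsd
    have hdB0 : 0 ≤ B.det.re := psd_det_re_nonneg hB
    rw [hdetA, herm_det_eq hB.1, herm_det_eq hSpsd.1, ← Complex.ofReal_mul,
      Complex.ofReal_re, Complex.ofReal_re]
    have h1' : S.det.re = ∏ i, hSpsd.1.eigenvalues i := by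
      rw [herm_det_eq hSpsd.1, Complex.ofReal_re]
    have h2' : B.det.re = ∏ i, hB.1.eigenvalues i := by
      rw [herm_det_eq hB.1, Complex.ofReal_re]
    rw [h1'] at hdS1 hdS0
    rw [h2'] at hdB0
    nlinarith

/-- The singular values of a matrix: square roots of the eigenvalues of `MᴴM`
(unordered indexing; products over all of them are order-independent). -/
noncomputable def singVals {a b : ℕ} (M : Matrix (Fin a) (Fin b) ℂ) : Fin b → ℝ :=
  fun i => Real.sqrt ((Matrix.posSemidef_conjTranspose_mul_self M).1.eigenvalues i)

lemma prod_singVals_sq {a b : ℕ} (M : Matrix (Fin a) (Fin b) ℂ) :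
    ∏ k, singVals M k ^ 2 = ((Mᴴ * M).det).re := by
  have h := Matrix.posSemidef_conjTranspose_mul_self M
  rw [herm_det_eq h.1, Complex.ofReal_re]
  unfold singVals
  exact Finset.prod_congr rfl fun i _ => Real.sq_sqrt (h.eigenvalues_nonneg i)

theorem efficiency_union_upper_bound (n m q₁ q₂ : ℕ) (hm : q₁ + q₂ ≤ m) (hmn : m ≤ n)
    (W : Matrix (Fin n) (Fin m) ℂ) (hW : Wᴴ * W = 1)
    (Q : Matrix (Fin n) (Fin (q₁ + q₂)) ℂ) (hQ : Qᴴ * Q = 1)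
    (Q₁ : Matrix (Fin n) (Fin q₁) ℂ)
    (hQ₁ : Q₁ = Q.submatrix id (Fin.castAdd q₂)) :
    ∏ k, singVals (Wᴴ * Q) k ^ 2 ≤ ∏ k, singVals (Wᴴ * Q₁) k ^ 2 := by
  -- the projection complement is PSD
  have hXX : W * Wᴴ * (W * Wᴴ) = W * Wᴴ := by
    rw [Matrix.mul_assoc W Wᴴ (W * Wᴴ), ← Matrix.mul_assoc Wᴴ W Wᴴ, hW, Matrix.one_mul]
  have hPh : (1 - W * Wᴴ)ᴴ = 1 - W * Wᴴ := by
    simp [conjTranspose_sub, conjTranspose_mul]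
  have hkey : (1 - W * Wᴴ) * (1 - W * Wᴴ) = 1 - W * Wᴴ := by
    rw [sub_mul, mul_sub, mul_sub, hXX]
    simp only [one_mul, mul_one]
    abel
  have hP : (1 - W * Wᴴ).PosSemidef := by
    have := Matrix.posSemidef_conjTranspose_mul_self (1 - W * Wᴴ)
    rwa [hPh, hkey] at this
  set N := (Wᴴ * Q)ᴴ * (Wᴴ * Q) with hNdef
  have hN : N.PosSemidef := Matrix.posSemidef_conjTranspose_mul_self _
  have h1N : (1 - N).PosSemidef := by
    have heq : (1 : Matrix (Fin (q₁ + q₂)) (Fin (q₁ + q₂)) ℂ) - N = Qᴴ * (1 - W * Wᴴ) * Q := by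
      rw [hNdef, conjTranspose_mul, conjTranspose_conjTranspose, Matrix.mul_sub,
        Matrix.sub_mul, Matrix.mul_one, hQ]
      rw [Matrix.mul_assoc, Matrix.mul_assoc, Matrix.mul_assoc]
    rw [heq]
    exact hP.conjTranspose_mul_mul_same Q
  set e := finSumFinEquiv (m := q₁) (n := q₂) with hedef
  set A := N.submatrix e e with hAdef
  have hdetA : A.det = N.det := det_submatrix_equiv_self e N
  have hApsd : A.PosSemidef := hN.submatrix e
  have h1A : (1 - A).PosSemidef := by
    have heq : (1 : Matrix (Fin q₁ ⊕ Fin q₂) (Fin q₁ ⊕ Fin q₂) ℂ) - A = (1 - N).submatrix e e := by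
      ext i j
      by_cases h : i = j <;>
        simp [hAdef, one_apply, e.injective.eq_iff, h]
    rw [heq]
    exact h1N.submatrix e
  have hWQ : Wᴴ * Q₁ = (Wᴴ * Q).submatrix id (Fin.castAdd q₂) := by
    ext i j
    simp [hQ₁, mul_apply]
  have hblock : A.toBlocks₁₁ = (Wᴴ * Q₁)ᴴ * (Wᴴ * Q₁) := by
    rw [hWQ]
    ext i j
    simp [hAdef, hNdef, toBlocks₁₁, mul_apply, conjTranspose_apply, hedef]
  rw [prod_singVals_sq, prod_singVals_sq, ← hdetA, ← hblock]
  exact det_re_le_block A hApsd h1A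
end

section
/- Let A ∈ ℂ^{n×q} have full column rank, W ∈ ℂ^{n×m} have orthonormal columns (m ≥ q) with W*A of full column rank, and b ∈ ℂⁿ. If y minimizes ‖WW*(Ay − b)‖₂, then ‖A*Ay − A*b‖₂ ≤ [cos φ₁ · sin φ_q / cos² φ_q] · ‖A‖₂ · ‖P_A^⊥ b‖₂, where cos φ_k = σ_k(W*U₁) for the orthonormal range basis U₁ of A, sin φ_q = σ₁(W*U₂) with U₂ an orthonormal basis of range(A)^⊥, and P_A^⊥ = I − U₁U₁*. -/
open Matrix
open scoped ComplexOrder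

/-- The Euclidean 2-norm of a vector. -/
noncomputable def vnorm {n : ℕ} (v : Fin n → ℂ) : ℝ :=
  Real.sqrt (∑ i, ‖v i‖ ^ 2)

namespace PLS

noncomputable def nsq {k : ℕ} (v : Fin k → ℂ) : ℝ := ∑ i, ‖v i‖ ^ 2

lemma nsq_nonneg {k : ℕ} (v : Fin k → ℂ) : 0 ≤ nsq v :=
  Finset.sum_nonneg fun i _ => by positivity

lemma vnorm_eq {k : ℕ} (v : Fin k → ℂ) : vnorm v = Real.sqrt (nsq v) := rfl

lemma vnorm_nonneg {k : ℕ} (v : Fin k → ℂ) : 0 ≤ vnorm v := Real.sqrt_nonneg _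

lemma vnorm_sq {k : ℕ} (v : Fin k → ℂ) : vnorm v ^ 2 = nsq v := by
  rw [vnorm_eq, Real.sq_sqrt (nsq_nonneg v)]

lemma nsq_eq_zero {k : ℕ} {v : Fin k → ℂ} (h : nsq v = 0) : v = 0 := by
  funext i
  have := (Finset.sum_eq_zero_iff_of_nonneg (fun i _ => by positivity)).mp h i (Finset.mem_univ i)
  simpa [pow_eq_zero_iff, norm_eq_zero] using this

lemma re_dot {k : ℕ} (v : Fin k → ℂ) : (star v ⬝ᵥ v).re = nsq v := by
  simp only [dotProduct, Pi.star_apply, nsq]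
  rw [Complex.re_sum]
  refine Finset.sum_congr rfl fun i _ => ?_
  rw [show star (v i) = (starRingEnd ℂ) (v i) from rfl, RCLike.conj_mul (v i)]
  norm_cast

lemma star_dot_mulVec {k l : ℕ} (M : Matrix (Fin k) (Fin l) ℂ) (x : Fin k → ℂ) (v : Fin l → ℂ) :
    star x ⬝ᵥ M.mulVec v = star (Mᴴ.mulVec x) ⬝ᵥ v := by
  rw [dotProduct_mulVec, star_mulVec, conjTranspose_conjTranspose]

lemma dot_re_symm {k : ℕ} (v w : Fin k → ℂ) : (star v ⬝ᵥ w).re = (star w ⬝ᵥ v).re := by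
  rw [star_dotProduct]
  simp [Complex.conj_re]

lemma nsq_mulVec_iso {k l : ℕ} {M : Matrix (Fin k) (Fin l) ℂ} (hM : Mᴴ * M = 1)
    (x : Fin l → ℂ) : nsq (M.mulVec x) = nsq x := by
  rw [← re_dot, ← re_dot x]
  congr 1
  rw [star_dot_mulVec M (M.mulVec x) x, mulVec_mulVec, hM, one_mulVec]

lemma vnorm_mulVec_iso {k l : ℕ} {M : Matrix (Fin k) (Fin l) ℂ} (hM : Mᴴ * M = 1)
    (x : Fin l → ℂ) : vnorm (M.mulVec x) = vnorm x := by
  rw [vnorm_eq, nsq_mulVec_iso hM, ← vnorm_eq]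

lemma nsq_mulVec_eq_quad {k l : ℕ} (G : Matrix (Fin k) (Fin l) ℂ) (x : Fin l → ℂ) :
    nsq (G.mulVec x) = (star x ⬝ᵥ (Gᴴ * G).mulVec x).re := by
  rw [← re_dot]
  congr 1
  rw [← mulVec_mulVec, star_dot_mulVec Gᴴ x (G.mulVec x), conjTranspose_conjTranspose]

lemma quad_eq {k : ℕ} (H : Matrix (Fin k) (Fin k) ℂ) (hH : H.IsHermitian) (x : Fin k → ℂ) :
    (star x ⬝ᵥ H.mulVec x).re =
      ∑ i, hH.eigenvalues i *
        ‖(star (hH.eigenvectorUnitary : Matrix (Fin k) (Fin k) ℂ)).mulVec x i‖ ^ 2 := by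
  set U : Matrix (Fin k) (Fin k) ℂ := (hH.eigenvectorUnitary : Matrix (Fin k) (Fin k) ℂ)
  set z := (star U).mulVec x with hz
  have hU : Uᴴ = star U := rfl
  conv_lhs => rw [hH.spectral_theorem, Unitary.conjStarAlgAut_apply]
  rw [← mulVec_mulVec, ← mulVec_mulVec, star_dot_mulVec U x _, hU, ← hz]
  have hdz : (Matrix.diagonal (RCLike.ofReal ∘ hH.eigenvalues)).mulVec z
      = fun i => (hH.eigenvalues i : ℂ) * z i := by
    funext i; rw [mulVec_diagonal]; rfl
  rw [hdz]
  simp only [dotProduct, Pi.star_apply]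
  rw [Complex.re_sum]
  refine Finset.sum_congr rfl fun i _ => ?_
  have : star (z i) * ((hH.eigenvalues i : ℂ) * z i)
      = (hH.eigenvalues i : ℂ) * (star (z i) * z i) := by ring
  rw [this, show star (z i) = (starRingEnd ℂ) (z i) from rfl, RCLike.conj_mul (z i)]
  simp [← Complex.ofReal_pow, ← Complex.ofReal_mul]

lemma quad_le_of_eig_le {k : ℕ} {H : Matrix (Fin k) (Fin k) ℂ} (hH : H.IsHermitian)
    {C : ℝ} (h : ∀ i, hH.eigenvalues i ≤ C) (x : Fin k → ℂ) :
    (star x ⬝ᵥ H.mulVec x).re ≤ C * nsq x := by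
  have hUU : (star (hH.eigenvectorUnitary : Matrix (Fin k) (Fin k) ℂ))ᴴ *
      (star (hH.eigenvectorUnitary : Matrix (Fin k) (Fin k) ℂ)) = 1 := by
    rw [star_eq_conjTranspose, conjTranspose_conjTranspose, ← star_eq_conjTranspose]
    exact (Matrix.mem_unitaryGroup_iff).mp hH.eigenvectorUnitary.2
  have hz : nsq ((star (hH.eigenvectorUnitary : Matrix (Fin k) (Fin k) ℂ)).mulVec x) = nsq x :=
    nsq_mulVec_iso hUU x
  rw [quad_eq H hH x, ← hz]
  unfold nsq
  rw [Finset.mul_sum]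
  exact Finset.sum_le_sum fun i _ => mul_le_mul_of_nonneg_right (h i) (by positivity)

lemma le_quad_of_le_eig {k : ℕ} {H : Matrix (Fin k) (Fin k) ℂ} (hH : H.IsHermitian)
    {c : ℝ} (h : ∀ i, c ≤ hH.eigenvalues i) (x : Fin k → ℂ) :
    c * nsq x ≤ (star x ⬝ᵥ H.mulVec x).re := by
  have hUU : (star (hH.eigenvectorUnitary : Matrix (Fin k) (Fin k) ℂ))ᴴ *
      (star (hH.eigenvectorUnitary : Matrix (Fin k) (Fin k) ℂ)) = 1 := by
    rw [star_eq_conjTranspose, conjTranspose_conjTranspose, ← star_eq_conjTranspose]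
    exact (Matrix.mem_unitaryGroup_iff).mp hH.eigenvectorUnitary.2
  have hz : nsq ((star (hH.eigenvectorUnitary : Matrix (Fin k) (Fin k) ℂ)).mulVec x) = nsq x :=
    nsq_mulVec_iso hUU x
  rw [quad_eq H hH x, ← hz]
  unfold nsq
  rw [Finset.mul_sum]
  exact Finset.sum_le_sum fun i _ => mul_le_mul_of_nonneg_right (h i) (by positivity)

lemma abs_dot_le {k : ℕ} (v w : Fin k → ℂ) :
    ‖star v ⬝ᵥ w‖ ≤ vnorm v * vnorm w := by
  let v' : EuclideanSpace ℂ (Fin k) := (WithLp.equiv 2 _).symm v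
  let w' : EuclideanSpace ℂ (Fin k) := (WithLp.equiv 2 _).symm w
  have h1 : (inner ℂ v' w' : ℂ) = star v ⬝ᵥ w := by
    simp [inner, dotProduct, v', w', PiLp.inner_apply, mul_comm]
  have h2 : vnorm v = ‖v'‖ := by rw [EuclideanSpace.norm_eq]; rfl
  have h3 : vnorm w = ‖w'‖ := by rw [EuclideanSpace.norm_eq]; rfl
  rw [← h1, h2, h3]
  exact norm_inner_le_norm v' w'

lemma singVals_nonneg {a b : ℕ} (M : Matrix (Fin a) (Fin b) ℂ) (i : Fin b) :
    0 ≤ singVals M i := Real.sqrt_nonneg _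

lemma sup_singVals_nonneg {a b : ℕ} (M : Matrix (Fin a) (Fin b) ℂ) :
    0 ≤ ⨆ i, singVals M i := by
  rcases Nat.eq_zero_or_pos b with hb | hb
  · subst hb
    rw [Real.iSup_of_isEmpty]
  · haveI : Nonempty (Fin b) := ⟨⟨0, hb⟩⟩
    exact le_trans (singVals_nonneg M ⟨0, hb⟩)
      (le_ciSup (Set.Finite.bddAbove (Set.finite_range _)) _)

lemma eig_le_sup_sq {a b : ℕ} (M : Matrix (Fin a) (Fin b) ℂ) (i : Fin b) :
    (Matrix.posSemidef_conjTranspose_mul_self M).1.eigenvalues i ≤ (⨆ j, singVals M j) ^ 2 := by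
  have h1 : singVals M i ≤ ⨆ j, singVals M j :=
    le_ciSup (Set.Finite.bddAbove (Set.finite_range _)) i
  have h2 : (Matrix.posSemidef_conjTranspose_mul_self M).1.eigenvalues i = singVals M i ^ 2 := by
    rw [singVals, Real.sq_sqrt ((Matrix.posSemidef_conjTranspose_mul_self M).eigenvalues_nonneg i)]
  rw [h2]
  exact pow_le_pow_left₀ (singVals_nonneg M i) h1 2

lemma vnorm_mulVec_le {k l : ℕ} (G : Matrix (Fin k) (Fin l) ℂ) (x : Fin l → ℂ) :
    vnorm (G.mulVec x) ≤ (⨆ i, singVals G i) * vnorm x := by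
  have hn : nsq (G.mulVec x) ≤ (⨆ i, singVals G i) ^ 2 * nsq x := by
    rw [nsq_mulVec_eq_quad]
    exact quad_le_of_eig_le (Matrix.posSemidef_conjTranspose_mul_self G).1 (eig_le_sup_sq G) x
  have := Real.sqrt_le_sqrt hn
  rw [← vnorm_eq] at this
  refine this.trans (le_of_eq ?_)
  rw [Real.sqrt_mul (sq_nonneg _), Real.sqrt_sq (sup_singVals_nonneg G), ← vnorm_eq]

lemma vnorm_conjTranspose_mulVec_le {k l : ℕ} (G : Matrix (Fin k) (Fin l) ℂ) (v : Fin k → ℂ) :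
    vnorm (Gᴴ.mulVec v) ≤ (⨆ i, singVals G i) * vnorm v := by
  rcases eq_or_lt_of_le (vnorm_nonneg (Gᴴ.mulVec v)) with h0 | h0
  · exact (h0.symm) ▸ mul_nonneg (sup_singVals_nonneg G) (vnorm_nonneg v)
  · have key : vnorm (Gᴴ.mulVec v) ^ 2 ≤ (⨆ i, singVals G i) * vnorm v * vnorm (Gᴴ.mulVec v) := by
      rw [vnorm_sq, ← re_dot]
      calc (star (Gᴴ.mulVec v) ⬝ᵥ Gᴴ.mulVec v).re
          = (star (G.mulVec (Gᴴ.mulVec v)) ⬝ᵥ v).re := by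
            rw [star_dot_mulVec Gᴴ (Gᴴ.mulVec v) v, conjTranspose_conjTranspose]
        _ ≤ ‖star (G.mulVec (Gᴴ.mulVec v)) ⬝ᵥ v‖ := Complex.re_le_norm _
        _ ≤ vnorm (G.mulVec (Gᴴ.mulVec v)) * vnorm v := abs_dot_le _ _
        _ ≤ ((⨆ i, singVals G i) * vnorm (Gᴴ.mulVec v)) * vnorm v :=
            mul_le_mul_of_nonneg_right (vnorm_mulVec_le G _) (vnorm_nonneg v)
        _ = (⨆ i, singVals G i) * vnorm v * vnorm (Gᴴ.mulVec v) := by ring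
    rw [sq] at key
    exact le_of_mul_le_mul_right (by linarith) h0

lemma inf_singVals_nonneg {a b : ℕ} [Nonempty (Fin b)] (M : Matrix (Fin a) (Fin b) ℂ) :
    0 ≤ ⨅ i, singVals M i :=
  le_ciInf fun i => singVals_nonneg M i

lemma le_vnorm_gram_mulVec {k l : ℕ} [Nonempty (Fin l)] (G : Matrix (Fin k) (Fin l) ℂ)
    (x : Fin l → ℂ) :
    (⨅ i, singVals G i) ^ 2 * vnorm x ≤ vnorm ((Gᴴ * G).mulVec x) := by
  set s₀ := ⨅ i, singVals G i with hs₀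
  have hs₀n : 0 ≤ s₀ := inf_singVals_nonneg G
  have heig : ∀ i, s₀ ^ 2 ≤ (Matrix.posSemidef_conjTranspose_mul_self G).1.eigenvalues i := by
    intro i
    have h1 : s₀ ≤ singVals G i := ciInf_le (Set.Finite.bddBelow (Set.finite_range _)) i
    have h2 : (Matrix.posSemidef_conjTranspose_mul_self G).1.eigenvalues i
        = singVals G i ^ 2 := by
      rw [singVals,
        Real.sq_sqrt ((Matrix.posSemidef_conjTranspose_mul_self G).eigenvalues_nonneg i)]
    rw [h2]
    exact pow_le_pow_left₀ hs₀n h1 2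
  have hq : s₀ ^ 2 * nsq x ≤ (star x ⬝ᵥ (Gᴴ * G).mulVec x).re :=
    le_quad_of_le_eig (Matrix.posSemidef_conjTranspose_mul_self G).1 heig x
  have hcs : (star x ⬝ᵥ (Gᴴ * G).mulVec x).re ≤ vnorm x * vnorm ((Gᴴ * G).mulVec x) :=
    (Complex.re_le_norm _).trans (abs_dot_le _ _)
  rcases eq_or_lt_of_le (vnorm_nonneg x) with h0 | h0
  · rw [← h0, mul_zero]
    exact vnorm_nonneg _
  · have : s₀ ^ 2 * vnorm x * vnorm x ≤ vnorm ((Gᴴ * G).mulVec x) * vnorm x := by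
      calc s₀ ^ 2 * vnorm x * vnorm x = s₀ ^ 2 * nsq x := by rw [← vnorm_sq]; ring
        _ ≤ (star x ⬝ᵥ (Gᴴ * G).mulVec x).re := hq
        _ ≤ vnorm x * vnorm ((Gᴴ * G).mulVec x) := hcs
        _ = vnorm ((Gᴴ * G).mulVec x) * vnorm x := by ring
    exact le_of_mul_le_mul_right this h0

lemma nsq_sub_smul {k : ℕ} (u v : Fin k → ℂ) (t : ℝ) :
    nsq (u - (t : ℂ) • v) = nsq u - 2 * t * (star u ⬝ᵥ v).re + t ^ 2 * nsq v := by
  rw [← re_dot, ← re_dot u, ← re_dot v]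
  have hstar : star (u - (t : ℂ) • v) = star u - (t : ℂ) • star v := by
    funext i
    simp [Complex.conj_ofReal]
  rw [hstar, sub_dotProduct, dotProduct_sub, dotProduct_sub, smul_dotProduct,
    dotProduct_smul, dotProduct_smul]
  have hre : ∀ z : ℂ, ((t : ℂ) • z).re = t * z.re := by
    intro z
    simp [Complex.smul_re]
  simp only [smul_dotProduct, dotProduct_smul, Complex.sub_re, Complex.add_re, hre]
  rw [dot_re_symm v u]
  ring

lemma nsq_mono {k : ℕ} {a b : Fin k → ℂ} (h : vnorm a ≤ vnorm b) : nsq a ≤ nsq b := by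
  rw [← vnorm_sq, ← vnorm_sq]
  exact pow_le_pow_left₀ (vnorm_nonneg a) h 2

lemma normal_equation {n q m : ℕ} (A : Matrix (Fin n) (Fin q) ℂ)
    (W : Matrix (Fin n) (Fin m) ℂ) (b : Fin n → ℂ) (y : Fin q → ℂ) (hW : Wᴴ * W = 1)
    (hy : ∀ z : Fin q → ℂ,
      vnorm ((W * Wᴴ).mulVec (A.mulVec y - b)) ≤ vnorm ((W * Wᴴ).mulVec (A.mulVec z - b))) :
    Aᴴ.mulVec ((W * Wᴴ).mulVec (A.mulVec y - b)) = 0 := by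
  set P := W * Wᴴ with hPdef
  have hPH : Pᴴ = P := by rw [hPdef, conjTranspose_mul, conjTranspose_conjTranspose]
  have hPP : P * P = P := by
    rw [hPdef, Matrix.mul_assoc, ← Matrix.mul_assoc Wᴴ, hW, Matrix.one_mul]
  set u := P.mulVec (A.mulVec y - b) with hu
  set g := Aᴴ.mulVec u with hg
  by_contra hgne
  have hnsqg : 0 < nsq g := by
    rcases eq_or_lt_of_le (nsq_nonneg g) with h0 | h0
    · exact absurd (nsq_eq_zero h0.symm) hgne
    · exact h0
  set v := (P * A).mulVec g with hv
  set t : ℝ := nsq g / (nsq v + 1) with ht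
  have hvpos : 0 < nsq v + 1 := by have := nsq_nonneg v; linarith
  have htpos : 0 < t := div_pos hnsqg hvpos
  have hres : P.mulVec (A.mulVec (y - (t : ℂ) • g) - b) = u - (t : ℂ) • v := by
    rw [mulVec_sub A, mulVec_smul]
    rw [show A.mulVec y - (t : ℂ) • A.mulVec g - b
        = (A.mulVec y - b) - (t : ℂ) • A.mulVec g by abel]
    rw [mulVec_sub, mulVec_smul, hu, hv, mulVec_mulVec]
  have hdot : (star u ⬝ᵥ v).re = nsq g := by
    rw [hv, star_dot_mulVec (P * A) u g]
    have h1 : (P * A)ᴴ.mulVec u = g := by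
      rw [conjTranspose_mul, hPH, hg, hu, mulVec_mulVec, mulVec_mulVec, Matrix.mul_assoc, hPP]
    rw [h1, re_dot]
  have hle : nsq u ≤ nsq (u - (t : ℂ) • v) := by
    have := hy (y - (t : ℂ) • g)
    rw [hres] at this
    exact nsq_mono this
  rw [nsq_sub_smul, hdot] at hle
  have ht1 : t * (nsq v + 1) = nsq g := by
    rw [ht]; field_simp
  nlinarith [sq_nonneg t]

lemma inj_of_rank {n q : ℕ} (B : Matrix (Fin n) (Fin q) ℂ) (h : B.rank = q) :
    Function.Injective B.mulVec := by
  have hadd := LinearMap.finrank_range_add_finrank_ker B.mulVecLin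
  rw [Module.finrank_fin_fun] at hadd
  have hrank : Module.finrank ℂ (LinearMap.range B.mulVecLin) = q := h
  have hker0 : Module.finrank ℂ (LinearMap.ker B.mulVecLin) = 0 := by omega
  have hker : LinearMap.ker B.mulVecLin = ⊥ := Submodule.finrank_eq_zero.mp hker0
  have hinj : Function.Injective B.mulVecLin := LinearMap.ker_eq_bot.mp hker
  intro x y hxy
  exact hinj (by simpa [Matrix.mulVecLin_apply] using hxy)

lemma posdef_gram {k l : ℕ} (G : Matrix (Fin k) (Fin l) ℂ)
    (hinj : ∀ x : Fin l → ℂ, G.mulVec x = 0 → x = 0) : (Gᴴ * G).PosDef := by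
  refine posDef_iff_dotProduct_mulVec.mpr ⟨Matrix.isHermitian_conjTranspose_mul_self G, fun x hx => ?_⟩
  have h1 : star x ⬝ᵥ (Gᴴ * G).mulVec x = star (G.mulVec x) ⬝ᵥ (G.mulVec x) := by
    rw [← mulVec_mulVec, dotProduct_mulVec, ← star_mulVec]
  rw [h1]
  have hne : G.mulVec x ≠ 0 := fun h => hx (hinj x h)
  exact Matrix.dotProduct_star_self_pos_iff.mpr hne

lemma vnorm_diag_le {k : ℕ} (S : Fin k → ℝ) {C : ℝ} (hC0 : 0 ≤ C)
    (hS0 : ∀ i, 0 ≤ S i) (hC : ∀ i, S i ≤ C) (x : Fin k → ℂ) :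
    vnorm ((Matrix.diagonal (fun i => (S i : ℂ))).mulVec x) ≤ C * vnorm x := by
  have hn : nsq ((Matrix.diagonal (fun i => (S i : ℂ))).mulVec x) ≤ C ^ 2 * nsq x := by
    unfold nsq
    rw [Finset.mul_sum]
    refine Finset.sum_le_sum fun i _ => ?_
    rw [mulVec_diagonal]
    have h1 : ‖(S i : ℂ) * x i‖ ^ 2 = S i ^ 2 * ‖x i‖ ^ 2 := by
      rw [norm_mul, mul_pow, Complex.norm_real, Real.norm_eq_abs, sq_abs]
    rw [h1]
    exact mul_le_mul_of_nonneg_right (pow_le_pow_left₀ (hS0 i) (hC i) 2) (by positivity)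
  have := Real.sqrt_le_sqrt hn
  rw [← vnorm_eq] at this
  refine this.trans (le_of_eq ?_)
  rw [Real.sqrt_mul (sq_nonneg _), Real.sqrt_sq hC0, ← vnorm_eq]

end PLS

theorem projected_ls_normal_equation_bound (n m q r : ℕ)
    (hqm : q ≤ m) (hmn : m ≤ n) (hqr : q + r = n)
    (A U₁ : Matrix (Fin n) (Fin q) ℂ) (U₂ : Matrix (Fin n) (Fin r) ℂ)
    (S : Fin q → ℝ) (V : Matrix (Fin q) (Fin q) ℂ)
    (W : Matrix (Fin n) (Fin m) ℂ) (b : Fin n → ℂ)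
    (hU₁ : U₁ᴴ * U₁ = 1) (hU₂ : U₂ᴴ * U₂ = 1) (horth : U₁ᴴ * U₂ = 0)
    (hcomp : U₁ * U₁ᴴ + U₂ * U₂ᴴ = 1)
    (hS : ∀ i, 0 < S i) (hV : Vᴴ * V = 1) (hV' : V * Vᴴ = 1)
    (hSVD : A = U₁ * Matrix.diagonal (fun i => (S i : ℂ)) * Vᴴ)
    (hW : Wᴴ * W = 1) (hWA : (W * Wᴴ * A).rank = q)
    (y : Fin q → ℂ)
    (hy : ∀ z : Fin q → ℂ,
      vnorm ((W * Wᴴ).mulVec (A.mulVec y - b)) ≤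
        vnorm ((W * Wᴴ).mulVec (A.mulVec z - b))) :
    vnorm ((Aᴴ * A).mulVec y - Aᴴ.mulVec b) ≤
      ((⨆ i, singVals (Wᴴ * U₁) i) * (⨆ i, singVals (Wᴴ * U₂) i) /
          (⨅ i, singVals (Wᴴ * U₁) i) ^ 2) *
        (⨆ i, singVals A i) * vnorm ((1 - U₁ * U₁ᴴ).mulVec b) := by
  classical
  rcases Nat.eq_zero_or_pos q with hq0 | hqpos
  · subst hq0
    have hL : vnorm ((Aᴴ * A).mulVec y - Aᴴ.mulVec b) = 0 := by
      rw [vnorm]; simp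
    have h1 : (⨆ i : Fin 0, singVals (Wᴴ * U₁) i) = 0 := Real.iSup_of_isEmpty _
    rw [hL, h1]
    have := PLS.vnorm_nonneg ((1 - U₁ * U₁ᴴ).mulVec b)
    simp
  haveI : Nonempty (Fin q) := ⟨⟨0, hqpos⟩⟩
  -- notation
  set Dg : Matrix (Fin q) (Fin q) ℂ := Matrix.diagonal (fun i => (S i : ℂ)) with hDg
  set Dinv : Matrix (Fin q) (Fin q) ℂ := Matrix.diagonal (fun i => ((S i : ℂ))⁻¹) with hDinv
  have hSne : ∀ i, (S i : ℂ) ≠ 0 := fun i => Complex.ofReal_ne_zero.mpr (hS i).ne'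
  have hDg1 : Dinv * Dg = 1 := by
    rw [hDinv, hDg, diagonal_mul_diagonal,
      show (fun i => ((S i : ℂ))⁻¹ * (S i : ℂ)) = fun _ => (1 : ℂ) from
        funext fun i => inv_mul_cancel₀ (hSne i), diagonal_one]
  have hDg2 : Dg * Dinv = 1 := by
    rw [hDg, hDinv, diagonal_mul_diagonal,
      show (fun i => (S i : ℂ) * ((S i : ℂ))⁻¹) = fun _ => (1 : ℂ) from
        funext fun i => mul_inv_cancel₀ (hSne i), diagonal_one]
  have hDgH : Dgᴴ = Dg := by
    rw [hDg, diagonal_conjTranspose,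
      show (star fun i => (S i : ℂ)) = fun i => (S i : ℂ) from
        funext fun i => by simp [Complex.conj_ofReal]]
  -- vector-level rewriting lemmas
  have eU₁ : ∀ x : Fin q → ℂ, U₁ᴴ.mulVec (U₁.mulVec x) = x := fun x => by
    rw [mulVec_mulVec, hU₁, one_mulVec]
  have eO : ∀ x : Fin r → ℂ, U₁ᴴ.mulVec (U₂.mulVec x) = 0 := fun x => by
    rw [mulVec_mulVec, horth, zero_mulVec]
  have eV : ∀ x : Fin q → ℂ, Vᴴ.mulVec (V.mulVec x) = x := fun x => by
    rw [mulVec_mulVec, hV, one_mulVec]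
  have eDg1 : ∀ x : Fin q → ℂ, Dinv.mulVec (Dg.mulVec x) = x := fun x => by
    rw [mulVec_mulVec, hDg1, one_mulVec]
  have eDg2 : ∀ x : Fin q → ℂ, Dg.mulVec (Dinv.mulVec x) = x := fun x => by
    rw [mulVec_mulVec, hDg2, one_mulVec]
  have hAv : ∀ x : Fin q → ℂ, A.mulVec x = U₁.mulVec (Dg.mulVec (Vᴴ.mulVec x)) := fun x => by
    rw [hSVD, ← mulVec_mulVec, ← mulVec_mulVec]
  have hAHv : ∀ x : Fin n → ℂ, Aᴴ.mulVec x = V.mulVec (Dg.mulVec (U₁ᴴ.mulVec x)) := fun x => by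
    rw [hSVD, conjTranspose_mul, conjTranspose_mul, conjTranspose_conjTranspose, hDgH,
      ← mulVec_mulVec, ← mulVec_mulVec]
  -- the normal equation
  have hg : Aᴴ.mulVec ((W * Wᴴ).mulVec (A.mulVec y - b)) = 0 :=
    PLS.normal_equation A W b y hW hy
  have hg2 : U₁ᴴ.mulVec ((W * Wᴴ).mulVec (A.mulVec y - b)) = 0 := by
    have h := congrArg (fun w => Dinv.mulVec (Vᴴ.mulVec w)) hg
    simp only [hAHv, eV, eDg1, mulVec_zero] at h
    exact h
  -- key vectors
  set c : Fin q → ℂ := Dg.mulVec (Vᴴ.mulVec y) - U₁ᴴ.mulVec b with hc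
  set d : Fin r → ℂ := U₂ᴴ.mulVec b with hd
  have hb : b = U₁.mulVec (U₁ᴴ.mulVec b) + U₂.mulVec d := by
    have h := congrArg (fun X : Matrix (Fin n) (Fin n) ℂ => X.mulVec b) hcomp
    simp only [add_mulVec, one_mulVec, ← mulVec_mulVec] at h
    exact h.symm
  have hLHSv : (Aᴴ * A).mulVec y - Aᴴ.mulVec b = V.mulVec (Dg.mulVec c) := by
    rw [← mulVec_mulVec, hAv y, hAHv, hAHv b, eU₁, hc]
    simp [mulVec_sub]
  have hMc : ((Wᴴ * U₁)ᴴ * (Wᴴ * U₁)).mulVec c = ((Wᴴ * U₁)ᴴ * (Wᴴ * U₂)).mulVec d := by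
    rw [← sub_eq_zero, ← hg2]
    conv_rhs => rw [hAv y, hb]
    simp only [conjTranspose_mul, conjTranspose_conjTranspose, hc, ← mulVec_mulVec,
      mulVec_sub, mulVec_add, eU₁, eO]
    abel
  have hd2 : (1 - U₁ * U₁ᴴ).mulVec b = U₂.mulVec d := by
    have h1 : (1 : Matrix (Fin n) (Fin n) ℂ) - U₁ * U₁ᴴ = U₂ * U₂ᴴ := by
      rw [← hcomp]; abel
    rw [h1, ← mulVec_mulVec, hd]
  -- injectivity and positivity
  have hinj0 : Function.Injective (W * Wᴴ * A).mulVec := PLS.inj_of_rank _ hWA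
  have hGinj : ∀ x : Fin q → ℂ, (Wᴴ * U₁).mulVec x = 0 → x = 0 := by
    intro x hx
    have hx' : Wᴴ.mulVec (U₁.mulVec x) = 0 := by rw [mulVec_mulVec]; exact hx
    have h1 : (W * Wᴴ * A).mulVec (V.mulVec (Dinv.mulVec x)) = 0 := by
      rw [← mulVec_mulVec, ← mulVec_mulVec, hAv, eV, eDg2, hx', mulVec_zero]
    have h2 : V.mulVec (Dinv.mulVec x) = 0 := by
      apply hinj0
      rw [h1, mulVec_zero]
    calc x = Dg.mulVec (Dinv.mulVec x) := (eDg2 x).symm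
      _ = Dg.mulVec (Vᴴ.mulVec (V.mulVec (Dinv.mulVec x))) := by rw [eV]
      _ = 0 := by rw [h2, mulVec_zero, mulVec_zero]
  have hMpd : ((Wᴴ * U₁)ᴴ * (Wᴴ * U₁)).PosDef := PLS.posdef_gram _ hGinj
  have hs₀pos : 0 < ⨅ i, singVals (Wᴴ * U₁) i := by
    have hpos : ∀ i, 0 < singVals (Wᴴ * U₁) i := fun i =>
      Real.sqrt_pos.mpr (hMpd.eigenvalues_pos i)
    obtain ⟨i₀, -, hmin⟩ := Finset.exists_min_image Finset.univ (singVals (Wᴴ * U₁))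
      ⟨⟨0, hqpos⟩, Finset.mem_univ _⟩
    exact lt_of_lt_of_le (hpos i₀) (le_ciInf fun j => hmin j (Finset.mem_univ j))
  -- bound on S
  have hsingle : ∀ i : Fin q, vnorm (Pi.single i 1 : Fin q → ℂ) = 1 := by
    intro i
    rw [vnorm]
    rw [show (∑ j, ‖(Pi.single i 1 : Fin q → ℂ) j‖ ^ 2) = 1 by
      simp [Pi.single_apply, apply_ite]]
    exact Real.sqrt_one
  have hsA : ∀ i, S i ≤ ⨆ j, singVals A j := by
    intro i
    have h1 := PLS.vnorm_mulVec_le A (V.mulVec (Pi.single i 1))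
    rw [PLS.vnorm_mulVec_iso hV, hsingle i, mul_one, hAv, eV,
      PLS.vnorm_mulVec_iso hU₁] at h1
    have h2 : vnorm (Dg.mulVec (Pi.single i 1)) = S i := by
      rw [vnorm]
      rw [show (∑ j, ‖(Dg.mulVec (Pi.single i 1)) j‖ ^ 2) = S i ^ 2 by
        simp only [hDg, mulVec_diagonal, Pi.single_apply]
        rw [Finset.sum_eq_single i]
        · simp [Complex.norm_real, sq_abs]
        · intro j _ hj; simp [hj]
        · intro h; exact absurd (Finset.mem_univ i) h]
      exact Real.sqrt_sq (hS i).le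
    rw [h2] at h1
    exact h1
  -- final assembly
  set sA := ⨆ j, singVals A j with hsAdef
  set σ₁ := ⨆ i, singVals (Wᴴ * U₁) i with hσ₁
  set σ₂ := ⨆ i, singVals (Wᴴ * U₂) i with hσ₂
  set s₀ := ⨅ i, singVals (Wᴴ * U₁) i with hs₀
  have hsA0 : 0 ≤ sA := PLS.sup_singVals_nonneg A
  have hσ₁0 : 0 ≤ σ₁ := PLS.sup_singVals_nonneg _
  have hσ₂0 : 0 ≤ σ₂ := PLS.sup_singVals_nonneg _
  have hβ0 : 0 ≤ vnorm d := PLS.vnorm_nonneg d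
  have hLHS : vnorm ((Aᴴ * A).mulVec y - Aᴴ.mulVec b) ≤ sA * vnorm c := by
    rw [hLHSv, PLS.vnorm_mulVec_iso hV, hDg]
    exact PLS.vnorm_diag_le S hsA0 (fun i => (hS i).le) hsA c
  have hgram : s₀ ^ 2 * vnorm c ≤ σ₁ * (σ₂ * vnorm d) := by
    calc s₀ ^ 2 * vnorm c ≤ vnorm (((Wᴴ * U₁)ᴴ * (Wᴴ * U₁)).mulVec c) :=
          PLS.le_vnorm_gram_mulVec _ c
      _ = vnorm ((Wᴴ * U₁)ᴴ.mulVec ((Wᴴ * U₂).mulVec d)) := by rw [hMc, ← mulVec_mulVec]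
      _ ≤ σ₁ * vnorm ((Wᴴ * U₂).mulVec d) := PLS.vnorm_conjTranspose_mulVec_le _ _
      _ ≤ σ₁ * (σ₂ * vnorm d) :=
          mul_le_mul_of_nonneg_left (PLS.vnorm_mulVec_le _ _) hσ₁0
  have hc_le : vnorm c ≤ σ₁ * (σ₂ * vnorm d) / s₀ ^ 2 := by
    rw [le_div_iff₀ (pow_pos hs₀pos 2)]
    calc vnorm c * s₀ ^ 2 = s₀ ^ 2 * vnorm c := by ring
      _ ≤ σ₁ * (σ₂ * vnorm d) := hgram
  have hRHS : vnorm ((1 - U₁ * U₁ᴴ).mulVec b) = vnorm d := by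
    rw [hd2, PLS.vnorm_mulVec_iso hU₂]
  rw [hRHS]
  calc vnorm ((Aᴴ * A).mulVec y - Aᴴ.mulVec b) ≤ sA * vnorm c := hLHS
    _ ≤ sA * (σ₁ * (σ₂ * vnorm d) / s₀ ^ 2) := mul_le_mul_of_nonneg_left hc_le hsA0
    _ = σ₁ * σ₂ / s₀ ^ 2 * sA * vnorm d := by field_simp
end

section
/- Let A ∈ ℂ^{n×q} have full column rank, b ∈ ℂⁿ, and W ∈ ℂ^{n×m} orthonormal with m ≥ q and WW*A of full column rank. Let x = (A*A)^{-1}A*b and y = (A*WW*A)^{-1}A*WW*b. Then ‖x − y‖₂ ≤ ‖A⁺‖₂‖b‖₂ [sin φ_q(W,A)·sin φ₁(W,b) + tan² φ_q(W,A)·cos φ₁(W,b)], where the subspace angles are defined via singular values of products of orthonormal bases: cos φ_k(W,A) = σ_k(W*U₁) with U₁ the orthonormal range basis of A, sin φ₁(W,b) = ‖(I−WW*)b‖₂/‖b‖₂, cos φ₁(W,b) = ‖W*b‖₂/‖b‖₂, and sin φ_q(W,A) = ‖(I−WW*)U₁‖₂. -/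
open Matrix
open scoped ComplexOrder

noncomputable def toE {n : ℕ} (v : Fin n → ℂ) : EuclideanSpace ℂ (Fin n) :=
  (WithLp.equiv 2 (Fin n → ℂ)).symm v

lemma vnorm_eq_norm {n : ℕ} (v : Fin n → ℂ) : vnorm v = ‖toE v‖ := by
  rw [EuclideanSpace.norm_eq]; rfl

lemma vnorm_nonneg {n : ℕ} (v : Fin n → ℂ) : 0 ≤ vnorm v := Real.sqrt_nonneg _

lemma inner_toE {n : ℕ} (u v : Fin n → ℂ) : (inner ℂ (toE u) (toE v) : ℂ) = star u ⬝ᵥ v :=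
  dotProduct_comm v (star u)

lemma dot_self_eq {n : ℕ} (v : Fin n → ℂ) : (star v ⬝ᵥ v).re = vnorm v ^ 2 := by
  rw [← inner_toE, inner_self_eq_norm_sq_to_K, vnorm_eq_norm]
  rw [pow_two, pow_two, ← RCLike.ofReal_mul]; norm_cast

lemma vnorm_eq_sqrt {n : ℕ} (v : Fin n → ℂ) : vnorm v = Real.sqrt ((star v ⬝ᵥ v).re) := by
  rw [dot_self_eq, Real.sqrt_sq (vnorm_nonneg v)]

lemma cauchy {n : ℕ} (u v : Fin n → ℂ) : (star u ⬝ᵥ v).re ≤ vnorm u * vnorm v := by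
  rw [← inner_toE, vnorm_eq_norm, vnorm_eq_norm]
  calc ((inner ℂ (toE u) (toE v) : ℂ)).re ≤ ‖(inner ℂ (toE u) (toE v) : ℂ)‖ := Complex.re_le_norm _
    _ ≤ ‖toE u‖ * ‖toE v‖ := norm_inner_le_norm _ _

lemma vnorm_sub_le {n : ℕ} (u v : Fin n → ℂ) : vnorm (u - v) ≤ vnorm u + vnorm v := by
  rw [vnorm_eq_norm, vnorm_eq_norm, vnorm_eq_norm]
  have : toE (u - v) = toE u - toE v := rfl
  rw [this]; exact norm_sub_le _ _

lemma dot_mulVec_swap {a b : ℕ} (M : Matrix (Fin a) (Fin b) ℂ) (u : Fin b → ℂ) (v : Fin a → ℂ) :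
    star (M *ᵥ u) ⬝ᵥ v = star u ⬝ᵥ (Mᴴ *ᵥ v) := by
  rw [star_mulVec, dotProduct_mulVec]

lemma vnorm_mulVec_eq {a b : ℕ} {M : Matrix (Fin a) (Fin b) ℂ} (hM : Mᴴ * M = 1)
    (v : Fin b → ℂ) : vnorm (M *ᵥ v) = vnorm v := by
  rw [vnorm_eq_sqrt, vnorm_eq_sqrt v]
  congr 2
  rw [star_mulVec, dotProduct_mulVec, vecMul_vecMul, hM, vecMul_one]

lemma quad_repr {a : ℕ} {H : Matrix (Fin a) (Fin a) ℂ} (hH : H.PosSemidef) (v : Fin a → ℂ) :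
    ∃ w : Fin a → ℂ, vnorm w = vnorm v ∧
      (star v ⬝ᵥ H *ᵥ v).re = ∑ i, hH.1.eigenvalues i * ‖w i‖ ^ 2 := by
  classical
  set U : Matrix (Fin a) (Fin a) ℂ := (hH.1.eigenvectorUnitary : Matrix (Fin a) (Fin a) ℂ) with hUdef
  have hU1 : Uᴴ * U = 1 := by
    rw [← star_eq_conjTranspose]
    exact Matrix.mem_unitaryGroup_iff'.mp hH.1.eigenvectorUnitary.2
  have hU2 : U * Uᴴ = 1 := by
    rw [← star_eq_conjTranspose]
    exact Matrix.mem_unitaryGroup_iff.mp hH.1.eigenvectorUnitary.2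
  have hiso : (Uᴴ)ᴴ * Uᴴ = 1 := by rwa [conjTranspose_conjTranspose]
  refine ⟨Uᴴ *ᵥ v, vnorm_mulVec_eq hiso v, ?_⟩
  have hs := hH.1.spectral_theorem
  rw [Unitary.conjStarAlgAut_apply, star_eq_conjTranspose] at hs
  calc (star v ⬝ᵥ H *ᵥ v).re
      = (star (Uᴴ *ᵥ v) ⬝ᵥ (diagonal (RCLike.ofReal ∘ hH.1.eigenvalues) *ᵥ (Uᴴ *ᵥ v))).re := by
        rw [star_mulVec, conjTranspose_conjTranspose]
        conv_lhs => rw [hs]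
        rw [← mulVec_mulVec, ← mulVec_mulVec, dotProduct_mulVec]
    _ = ∑ i, hH.1.eigenvalues i * ‖(Uᴴ *ᵥ v) i‖ ^ 2 := by
        rw [dotProduct, Complex.re_sum]
        refine Finset.sum_congr rfl fun i _ => ?_
        rw [mulVec_diagonal]
        simp [Pi.star_apply, Function.comp]
        rw [Complex.sq_norm, Complex.normSq_apply]
        ring

lemma vnorm_sq' {n : ℕ} (v : Fin n → ℂ) : vnorm v ^ 2 = ∑ i, ‖v i‖ ^ 2 :=
  Real.sq_sqrt (Finset.sum_nonneg fun i _ => sq_nonneg _)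

lemma quad_le {a : ℕ} {H : Matrix (Fin a) (Fin a) ℂ} (hH : H.PosSemidef) {t : ℝ}
    (ht : ∀ i, hH.1.eigenvalues i ≤ t) (v : Fin a → ℂ) :
    (star v ⬝ᵥ H *ᵥ v).re ≤ t * vnorm v ^ 2 := by
  obtain ⟨w, hw, he⟩ := quad_repr hH v
  rw [he, ← hw, vnorm_sq', Finset.mul_sum]
  exact Finset.sum_le_sum fun i _ => mul_le_mul_of_nonneg_right (ht i) (sq_nonneg _)

lemma quad_ge {a : ℕ} {H : Matrix (Fin a) (Fin a) ℂ} (hH : H.PosSemidef) {t : ℝ}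
    (ht : ∀ i, t ≤ hH.1.eigenvalues i) (v : Fin a → ℂ) :
    t * vnorm v ^ 2 ≤ (star v ⬝ᵥ H *ᵥ v).re := by
  obtain ⟨w, hw, he⟩ := quad_repr hH v
  rw [he, ← hw, vnorm_sq', Finset.mul_sum]
  exact Finset.sum_le_sum fun i _ => mul_le_mul_of_nonneg_right (ht i) (sq_nonneg _)

lemma mulVec_dot_eq {a b : ℕ} (M : Matrix (Fin a) (Fin b) ℂ) (v : Fin b → ℂ) :
    star (M *ᵥ v) ⬝ᵥ (M *ᵥ v) = star v ⬝ᵥ ((Mᴴ * M) *ᵥ v) := by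
  rw [star_mulVec, dotProduct_mulVec, vecMul_vecMul, dotProduct_mulVec]

lemma vnorm_mulVec_le {a b : ℕ} (M : Matrix (Fin a) (Fin b) ℂ) {t : ℝ} (ht0 : 0 ≤ t)
    (ht : ∀ i, singVals M i ≤ t) (v : Fin b → ℂ) : vnorm (M *ᵥ v) ≤ t * vnorm v := by
  have hev : ∀ i, (posSemidef_conjTranspose_mul_self M).1.eigenvalues i ≤ t ^ 2 := by
    intro i
    have h0 := (posSemidef_conjTranspose_mul_self M).eigenvalues_nonneg i
    have : (posSemidef_conjTranspose_mul_self M).1.eigenvalues i = singVals M i ^ 2 :=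
      (Real.sq_sqrt h0).symm
    rw [this]
    exact pow_le_pow_left₀ (Real.sqrt_nonneg _) (ht i) 2
  have h1 := quad_le (posSemidef_conjTranspose_mul_self M) hev v
  have h2 : vnorm (M *ᵥ v) ^ 2 = (star v ⬝ᵥ (Mᴴ * M) *ᵥ v).re := by
    rw [← dot_self_eq, mulVec_dot_eq]
  nlinarith [vnorm_nonneg (M *ᵥ v), vnorm_nonneg v, mul_nonneg ht0 (vnorm_nonneg v)]

lemma vnorm_conjT_mulVec_le {a b : ℕ} (M : Matrix (Fin a) (Fin b) ℂ) {t : ℝ} (ht0 : 0 ≤ t)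
    (ht : ∀ i, singVals M i ≤ t) (v : Fin a → ℂ) : vnorm (Mᴴ *ᵥ v) ≤ t * vnorm v := by
  have h1 : vnorm (Mᴴ *ᵥ v) ^ 2 = (star (M *ᵥ (Mᴴ *ᵥ v)) ⬝ᵥ v).re := by
    rw [← dot_self_eq, dot_mulVec_swap M (Mᴴ *ᵥ v) v]
  have h2 := cauchy (M *ᵥ (Mᴴ *ᵥ v)) v
  have h3 := vnorm_mulVec_le M ht0 ht (Mᴴ *ᵥ v)
  nlinarith [vnorm_nonneg (Mᴴ *ᵥ v), vnorm_nonneg v, mul_nonneg ht0 (vnorm_nonneg v)]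

lemma vnorm_mulVec_ge {a : ℕ} {H : Matrix (Fin a) (Fin a) ℂ} (hH : H.PosSemidef) {t : ℝ}
    (ht0 : 0 ≤ t) (ht : ∀ i, t ≤ hH.1.eigenvalues i) (v : Fin a → ℂ) :
    t * vnorm v ≤ vnorm (H *ᵥ v) := by
  have h1 := quad_ge hH ht v
  have h2 := cauchy v (H *ᵥ v)
  nlinarith [vnorm_nonneg v, vnorm_nonneg (H *ᵥ v), mul_nonneg ht0 (vnorm_nonneg v)]

lemma vnorm_conjT_contract {a b : ℕ} {M : Matrix (Fin a) (Fin b) ℂ} (hM : Mᴴ * M = 1)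
    (v : Fin a → ℂ) : vnorm (Mᴴ *ᵥ v) ≤ vnorm v := by
  have h1 : vnorm (Mᴴ *ᵥ v) ^ 2 = (star (M *ᵥ (Mᴴ *ᵥ v)) ⬝ᵥ v).re := by
    rw [← dot_self_eq, dot_mulVec_swap M (Mᴴ *ᵥ v) v]
  have h2 := cauchy (M *ᵥ (Mᴴ *ᵥ v)) v
  rw [vnorm_mulVec_eq hM] at h2
  nlinarith [vnorm_nonneg (Mᴴ *ᵥ v), vnorm_nonneg v]

lemma vnorm_diag_mulVec_le {a : ℕ} (c : Fin a → ℝ) {t : ℝ} (ht0 : 0 ≤ t) (hc : ∀ i, 0 ≤ c i)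
    (ht : ∀ i, c i ≤ t) (v : Fin a → ℂ) :
    vnorm ((diagonal fun i => (c i : ℂ)) *ᵥ v) ≤ t * vnorm v := by
  have key : ∀ i, ‖((diagonal fun j => (c j : ℂ)) *ᵥ v) i‖ ^ 2 ≤ t ^ 2 * ‖v i‖ ^ 2 := by
    intro i
    rw [mulVec_diagonal, norm_mul, Complex.norm_real, Real.norm_eq_abs, abs_of_nonneg (hc i),
      mul_pow]
    have h := pow_le_pow_left₀ (hc i) (ht i) 2
    nlinarith [sq_nonneg ‖v i‖]
  show Real.sqrt _ ≤ t * Real.sqrt _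
  calc Real.sqrt (∑ i, ‖((diagonal fun j => (c j : ℂ)) *ᵥ v) i‖ ^ 2)
      ≤ Real.sqrt (∑ i, t ^ 2 * ‖v i‖ ^ 2) :=
        Real.sqrt_le_sqrt (Finset.sum_le_sum fun i _ => key i)
    _ = t * Real.sqrt (∑ i, ‖v i‖ ^ 2) := by
        rw [← Finset.mul_sum, Real.sqrt_mul (sq_nonneg t), Real.sqrt_sq ht0]

lemma vnorm_pos {n : ℕ} {v : Fin n → ℂ} (hv : v ≠ 0) : 0 < vnorm v := by
  rw [vnorm_eq_norm]
  rw [norm_pos_iff]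
  intro h
  apply hv
  simpa [toE] using h

theorem projected_ls_solution_bound (n m q : ℕ) (hqm : q ≤ m) (hmn : m ≤ n)
    (A U₁ : Matrix (Fin n) (Fin q) ℂ) (S : Fin q → ℝ)
    (V : Matrix (Fin q) (Fin q) ℂ) (W : Matrix (Fin n) (Fin m) ℂ) (b : Fin n → ℂ)
    (hb : b ≠ 0)
    (hU₁ : U₁ᴴ * U₁ = 1) (hS : ∀ i, 0 < S i) (hV : Vᴴ * V = 1) (hV' : V * Vᴴ = 1)
    (hSVD : A = U₁ * Matrix.diagonal (fun i => (S i : ℂ)) * Vᴴ)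
    (hW : Wᴴ * W = 1)
    (hAA : IsUnit (Aᴴ * A).det) (hAWA : IsUnit (Aᴴ * W * Wᴴ * A).det)
    (x y : Fin q → ℂ)
    (hx : x = ((Aᴴ * A)⁻¹ * Aᴴ).mulVec b)
    (hy : y = ((Aᴴ * W * Wᴴ * A)⁻¹ * Aᴴ * W * Wᴴ).mulVec b) :
    vnorm (x - y) ≤
      (⨆ i, (S i)⁻¹) * vnorm b *
        ((⨆ i, singVals ((1 - W * Wᴴ) * U₁) i) *
            (vnorm ((1 - W * Wᴴ).mulVec b) / vnorm b) +
          ((⨆ i, singVals ((1 - W * Wᴴ) * U₁) i) /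
              (⨅ i, singVals (Wᴴ * U₁) i)) ^ 2 *
            (vnorm (Wᴴ.mulVec b) / vnorm b)) := by
  rcases Nat.eq_zero_or_pos q with hq | hq
  · subst hq
    have h1 : vnorm (x - y) = 0 := by simp [vnorm]
    have h2 : (⨆ i : Fin 0, (S i)⁻¹) = 0 := by
      rw [iSup, Set.range_eq_empty, Real.sSup_empty]
    rw [h1, h2, zero_mul, zero_mul]
  haveI : Nonempty (Fin q) := Fin.pos_iff_nonempty.mp hq
  -- names
  set D : Matrix (Fin q) (Fin q) ℂ := diagonal (fun i => (S i : ℂ)) with hDdef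
  set D' : Matrix (Fin q) (Fin q) ℂ := diagonal (fun i => ((S i)⁻¹ : ℂ)) with hD'def
  have hDH : Dᴴ = D := by
    rw [hDdef]
    ext i j
    simp only [conjTranspose_apply, diagonal_apply]
    by_cases h : i = j
    · subst h; simp [Complex.conj_ofReal]
    · have h' : ¬ j = i := fun hh => h hh.symm
      simp [h, h']
  have hScne : ∀ i, ((S i : ℂ)) ≠ 0 := fun i => by exact_mod_cast (hS i).ne'
  have hDD' : D * D' = 1 := by
    rw [hDdef, hD'def, diagonal_mul_diagonal]
    rw [show (fun i => (S i : ℂ) * ((S i : ℂ))⁻¹) = fun _ => (1 : ℂ) from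
      funext fun i => mul_inv_cancel₀ (hScne i), diagonal_one]
  have hD'D : D' * D = 1 := by
    rw [hDdef, hD'def, diagonal_mul_diagonal]
    rw [show (fun i => ((S i : ℂ))⁻¹ * (S i : ℂ)) = fun _ => (1 : ℂ) from
      funext fun i => inv_mul_cancel₀ (hScne i), diagonal_one]
  have hAH : Aᴴ = V * (D * U₁ᴴ) := by
    rw [hSVD, conjTranspose_mul, conjTranspose_mul, conjTranspose_conjTranspose, hDH]

  -- projections
  have hPH : (W * Wᴴ)ᴴ = W * Wᴴ := by
    rw [conjTranspose_mul, conjTranspose_conjTranspose]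
  have hPP : (W * Wᴴ) * (W * Wᴴ) = W * Wᴴ := by
    rw [Matrix.mul_assoc, ← Matrix.mul_assoc Wᴴ W, hW, Matrix.one_mul]
  have h1P : (1 - W * Wᴴ) * (1 - W * Wᴴ) = 1 - W * Wᴴ := by
    rw [Matrix.mul_sub, Matrix.mul_one, Matrix.sub_mul, Matrix.one_mul, hPP, sub_self, sub_zero]
  have h1PH : (1 - W * Wᴴ)ᴴ = 1 - W * Wᴴ := by
    rw [conjTranspose_sub, conjTranspose_one, hPH]
  -- G
  have hGalt : (Wᴴ * U₁)ᴴ * (Wᴴ * U₁) = U₁ᴴ * (W * (Wᴴ * U₁)) := by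
    simp only [conjTranspose_mul, conjTranspose_conjTranspose, Matrix.mul_assoc]
  have hAWA3 : Aᴴ * W * Wᴴ * A = V * (D * ((U₁ᴴ * (W * (Wᴴ * U₁))) * (D * Vᴴ))) := by
    rw [hAH, hSVD]; simp only [Matrix.mul_assoc]
  have hdetV : IsUnit V.det := by
    have := congrArg Matrix.det hV
    rw [det_mul, det_one] at this
    exact isUnit_iff_ne_zero.mpr (by intro h0; rw [h0, mul_zero] at this; exact one_ne_zero this.symm)
  have hGdet : IsUnit ((Wᴴ * U₁)ᴴ * (Wᴴ * U₁)).det := by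
    rw [hGalt]
    have h := hAWA
    rw [hAWA3] at h
    simp only [det_mul] at h
    rw [isUnit_iff_ne_zero] at h ⊢
    intro h0
    apply h
    rw [h0]
    ring
  set G : Matrix (Fin q) (Fin q) ℂ := (Wᴴ * U₁)ᴴ * (Wᴴ * U₁) with hGdef
  have hGG : G * G⁻¹ = 1 := mul_nonsing_inv _ hGdet
  have hG'G : G⁻¹ * G = 1 := nonsing_inv_mul _ hGdet
  -- x formula
  haveI : Invertible (Aᴴ * A) := (Aᴴ * A).invertibleOfIsUnitDet hAA
  haveI : Invertible (Aᴴ * W * Wᴴ * A) := (Aᴴ * W * Wᴴ * A).invertibleOfIsUnitDet hAWA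
  have hx' : x = (V * (D' * U₁ᴴ)) *ᵥ b := by
    rw [hx]
    have hstep : Aᴴ = (Aᴴ * A) * (V * (D' * U₁ᴴ)) := by
      rw [hAH, hSVD]
      simp only [Matrix.mul_assoc]
      rw [← Matrix.mul_assoc U₁ᴴ U₁, hU₁, Matrix.one_mul,
          ← Matrix.mul_assoc Vᴴ V, hV, Matrix.one_mul,
          ← Matrix.mul_assoc D D', hDD', Matrix.one_mul]
    have hmx : (Aᴴ * A)⁻¹ * Aᴴ = V * (D' * U₁ᴴ) := by
      calc (Aᴴ * A)⁻¹ * Aᴴ = (Aᴴ * A)⁻¹ * ((Aᴴ * A) * (V * (D' * U₁ᴴ))) := by rw [← hstep]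
        _ = V * (D' * U₁ᴴ) := by rw [← Matrix.mul_assoc, nonsing_inv_mul _ hAA, Matrix.one_mul]
    rw [hmx]
  have hy' : y = (V * (D' * (G⁻¹ * (U₁ᴴ * (W * Wᴴ))))) *ᵥ b := by
    rw [hy]
    have hstep2 : Aᴴ * (W * Wᴴ) = (Aᴴ * W * Wᴴ * A) * (V * (D' * (G⁻¹ * (U₁ᴴ * (W * Wᴴ))))) := by
      conv_rhs => rw [hAWA3]
      rw [hAH]
      simp only [Matrix.mul_assoc]
      rw [← Matrix.mul_assoc Vᴴ V, hV, Matrix.one_mul,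
          ← Matrix.mul_assoc D D', hDD', Matrix.one_mul]
      rw [← Matrix.mul_assoc Wᴴ U₁ (G⁻¹ * (U₁ᴴ * (W * Wᴴ))),
          ← Matrix.mul_assoc W (Wᴴ * U₁) (G⁻¹ * (U₁ᴴ * (W * Wᴴ))),
          ← Matrix.mul_assoc U₁ᴴ (W * (Wᴴ * U₁)) (G⁻¹ * (U₁ᴴ * (W * Wᴴ))),
          ← hGalt,
          ← Matrix.mul_assoc G G⁻¹, hGG, Matrix.one_mul]
    have hmy : (Aᴴ * W * Wᴴ * A)⁻¹ * Aᴴ * W * Wᴴ = V * (D' * (G⁻¹ * (U₁ᴴ * (W * Wᴴ)))) := by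
      have hgrp : (Aᴴ * W * Wᴴ * A)⁻¹ * Aᴴ * W * Wᴴ
          = (Aᴴ * W * Wᴴ * A)⁻¹ * (Aᴴ * (W * Wᴴ)) := by simp only [Matrix.mul_assoc]
      rw [hgrp]
      calc (Aᴴ * W * Wᴴ * A)⁻¹ * (Aᴴ * (W * Wᴴ))
          = (Aᴴ * W * Wᴴ * A)⁻¹ * ((Aᴴ * W * Wᴴ * A) * (V * (D' * (G⁻¹ * (U₁ᴴ * (W * Wᴴ)))))) := by
            rw [← hstep2]
        _ = V * (D' * (G⁻¹ * (U₁ᴴ * (W * Wᴴ)))) := by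
            rw [← Matrix.mul_assoc, nonsing_inv_mul _ hAWA, Matrix.one_mul]
    rw [hmy]
  -- suprema / infima
  set σ : ℝ := ⨆ i, singVals ((1 - W * Wᴴ) * U₁) i with hσdef
  set c : ℝ := ⨅ i, singVals (Wᴴ * U₁) i with hcdef
  set α : ℝ := ⨆ i, (S i)⁻¹ with hαdef
  have hσub : ∀ i, singVals ((1 - W * Wᴴ) * U₁) i ≤ σ := fun i =>
    le_ciSup (Set.Finite.bddAbove (Set.finite_range _)) i
  have hsnn : ∀ (a b : ℕ) (M : Matrix (Fin a) (Fin b) ℂ) (i : Fin b), 0 ≤ singVals M i :=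
    fun a b M i => Real.sqrt_nonneg _
  have hσ0 : 0 ≤ σ := le_trans (hsnn _ _ _ ⟨0, hq⟩) (hσub ⟨0, hq⟩)
  have hclb : ∀ i, c ≤ singVals (Wᴴ * U₁) i := fun i =>
    ciInf_le (Set.Finite.bddBelow (Set.finite_range _)) i
  have hc0 : 0 ≤ c := le_ciInf fun i => hsnn _ _ _ i
  have hα : ∀ i, (S i)⁻¹ ≤ α := fun i => by
    rw [hαdef]
    exact le_ciSup (Set.Finite.bddAbove (Set.finite_range fun j => (S j)⁻¹)) i
  have hα0 : 0 ≤ α := le_trans (inv_nonneg.mpr (hS ⟨0, hq⟩).le) (hα ⟨0, hq⟩)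
  -- positivity of c
  have hsingpos : ∀ i, 0 < singVals (Wᴴ * U₁) i := by
    intro i
    have hps := posSemidef_conjTranspose_mul_self (Wᴴ * U₁)
    have hnn := hps.eigenvalues_nonneg i
    rcases eq_or_lt_of_le hnn with h | h
    · exfalso
      have hdet := hps.1.det_eq_prod_eigenvalues
      rw [isUnit_iff_ne_zero] at hGdet
      apply hGdet
      rw [hGdef, hdet]
      exact Finset.prod_eq_zero (Finset.mem_univ i) (by rw [← h]; simp)
    · exact Real.sqrt_pos.mpr h
  have hcpos : 0 < c := by
    obtain ⟨i0, hi0⟩ := Finite.exists_min fun i => singVals (Wᴴ * U₁) i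
    exact lt_of_lt_of_le (hsingpos i0) (le_ciInf hi0)
  -- lower bound on eigenvalues of G
  have hev_ge : ∀ i, c ^ 2 ≤ (posSemidef_conjTranspose_mul_self (Wᴴ * U₁)).1.eigenvalues i := by
    intro i
    have hnn := (posSemidef_conjTranspose_mul_self (Wᴴ * U₁)).eigenvalues_nonneg i
    have he : (posSemidef_conjTranspose_mul_self (Wᴴ * U₁)).1.eigenvalues i
        = singVals (Wᴴ * U₁) i ^ 2 := (Real.sq_sqrt hnn).symm
    rw [he]
    exact pow_le_pow_left₀ hc0 (hclb i) 2
  have hGinvBound : ∀ z : Fin q → ℂ, vnorm (G⁻¹ *ᵥ z) ≤ (c ^ 2)⁻¹ * vnorm z := by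
    intro z
    have h1 := vnorm_mulVec_ge (posSemidef_conjTranspose_mul_self (Wᴴ * U₁)) (sq_nonneg c)
      hev_ge (G⁻¹ *ᵥ z)
    rw [mulVec_mulVec, ← hGdef, hGG, one_mulVec] at h1
    have hc2 : (0:ℝ) < c ^ 2 := pow_pos hcpos 2
    calc vnorm (G⁻¹ *ᵥ z) = (c ^ 2)⁻¹ * (c ^ 2 * vnorm (G⁻¹ *ᵥ z)) := by
          field_simp
      _ ≤ (c ^ 2)⁻¹ * vnorm z := mul_le_mul_of_nonneg_left h1 (inv_nonneg.mpr hc2.le)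
  -- decomposition identity
  have hMH : ((1 - W * Wᴴ) * U₁)ᴴ = U₁ᴴ * (1 - W * Wᴴ) := by rw [conjTranspose_mul, h1PH]
  have hMM : ((1 - W * Wᴴ) * U₁)ᴴ * ((1 - W * Wᴴ) * U₁) = 1 - G := by
    rw [hMH]
    calc U₁ᴴ * (1 - W * Wᴴ) * ((1 - W * Wᴴ) * U₁)
        = U₁ᴴ * ((1 - W * Wᴴ) * (1 - W * Wᴴ) * U₁) := by simp only [Matrix.mul_assoc]
      _ = U₁ᴴ * ((1 - W * Wᴴ) * U₁) := by rw [h1P]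
      _ = U₁ᴴ * U₁ - U₁ᴴ * (W * (Wᴴ * U₁)) := by
          rw [Matrix.sub_mul, Matrix.one_mul, Matrix.mul_sub]
          simp only [Matrix.mul_assoc]
      _ = 1 - G := by rw [hU₁, ← hGalt]
  have hdiff : U₁ᴴ - G⁻¹ * (U₁ᴴ * (W * Wᴴ))
      = ((1 - W * Wᴴ) * U₁)ᴴ * (1 - W * Wᴴ)
        - G⁻¹ * (((1 - W * Wᴴ) * U₁)ᴴ * (((1 - W * Wᴴ) * U₁) * (U₁ᴴ * (W * Wᴴ)))) := by
    have e1 : ((1 - W * Wᴴ) * U₁)ᴴ * (1 - W * Wᴴ) = U₁ᴴ - U₁ᴴ * (W * Wᴴ) := by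
      rw [hMH, Matrix.mul_assoc, h1P, Matrix.mul_sub, Matrix.mul_one]
    have e2 : ((1 - W * Wᴴ) * U₁)ᴴ * (((1 - W * Wᴴ) * U₁) * (U₁ᴴ * (W * Wᴴ)))
        = (1 - G) * (U₁ᴴ * (W * Wᴴ)) := by
      rw [← Matrix.mul_assoc, hMM]
    have e3 : G⁻¹ * ((1 - G) * (U₁ᴴ * (W * Wᴴ)))
        = G⁻¹ * (U₁ᴴ * (W * Wᴴ)) - U₁ᴴ * (W * Wᴴ) := by
      rw [Matrix.sub_mul, Matrix.one_mul, Matrix.mul_sub, ← Matrix.mul_assoc G⁻¹ G, hG'G,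
        Matrix.one_mul]
    rw [e1, e2, e3]
    abel
  -- the difference vector
  have hxy2 : x - y = (V * D') *ᵥ
      ((((1 - W * Wᴴ) * U₁)ᴴ * (1 - W * Wᴴ)) *ᵥ b
        - (G⁻¹ * (((1 - W * Wᴴ) * U₁)ᴴ * (((1 - W * Wᴴ) * U₁) * (U₁ᴴ * (W * Wᴴ))))) *ᵥ b) := by
    rw [hx', hy', ← Matrix.sub_mulVec]
    have hfac : V * (D' * U₁ᴴ) - V * (D' * (G⁻¹ * (U₁ᴴ * (W * Wᴴ))))
        = (V * D') * (U₁ᴴ - G⁻¹ * (U₁ᴴ * (W * Wᴴ))) := by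
      rw [Matrix.mul_sub]
      simp only [Matrix.mul_assoc]
    rw [hfac, hdiff, Matrix.mul_sub, Matrix.sub_mulVec, Matrix.mulVec_sub]
    simp only [mulVec_mulVec]
  -- bounds on the two pieces
  have hu1 : vnorm ((((1 - W * Wᴴ) * U₁)ᴴ * (1 - W * Wᴴ)) *ᵥ b)
      ≤ σ * vnorm ((1 - W * Wᴴ) *ᵥ b) := by
    rw [← mulVec_mulVec]
    exact vnorm_conjT_mulVec_le _ hσ0 hσub _
  have hWb : vnorm (U₁ᴴ *ᵥ (W *ᵥ (Wᴴ *ᵥ b))) ≤ vnorm (Wᴴ *ᵥ b) := by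
    calc vnorm (U₁ᴴ *ᵥ (W *ᵥ (Wᴴ *ᵥ b))) ≤ vnorm (W *ᵥ (Wᴴ *ᵥ b)) := vnorm_conjT_contract hU₁ _
      _ = vnorm (Wᴴ *ᵥ b) := vnorm_mulVec_eq hW _
  have hu2 : vnorm ((G⁻¹ * (((1 - W * Wᴴ) * U₁)ᴴ * (((1 - W * Wᴴ) * U₁) * (U₁ᴴ * (W * Wᴴ))))) *ᵥ b)
      ≤ (c ^ 2)⁻¹ * (σ * (σ * vnorm (Wᴴ *ᵥ b))) := by
    have hsplit : (G⁻¹ * (((1 - W * Wᴴ) * U₁)ᴴ * (((1 - W * Wᴴ) * U₁) * (U₁ᴴ * (W * Wᴴ))))) *ᵥ b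
        = G⁻¹ *ᵥ (((1 - W * Wᴴ) * U₁)ᴴ *ᵥ (((1 - W * Wᴴ) * U₁) *ᵥ (U₁ᴴ *ᵥ (W *ᵥ (Wᴴ *ᵥ b))))) := by
      simp only [mulVec_mulVec, Matrix.mul_assoc]
    rw [hsplit]
    have t1 : vnorm (((1 - W * Wᴴ) * U₁) *ᵥ (U₁ᴴ *ᵥ (W *ᵥ (Wᴴ *ᵥ b))))
        ≤ σ * vnorm (Wᴴ *ᵥ b) := by
      calc vnorm (((1 - W * Wᴴ) * U₁) *ᵥ (U₁ᴴ *ᵥ (W *ᵥ (Wᴴ *ᵥ b))))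
          ≤ σ * vnorm (U₁ᴴ *ᵥ (W *ᵥ (Wᴴ *ᵥ b))) := vnorm_mulVec_le _ hσ0 hσub _
        _ ≤ σ * vnorm (Wᴴ *ᵥ b) := mul_le_mul_of_nonneg_left hWb hσ0
    have t2 : vnorm (((1 - W * Wᴴ) * U₁)ᴴ *ᵥ (((1 - W * Wᴴ) * U₁) *ᵥ (U₁ᴴ *ᵥ (W *ᵥ (Wᴴ *ᵥ b)))))
        ≤ σ * (σ * vnorm (Wᴴ *ᵥ b)) := by
      calc vnorm (((1 - W * Wᴴ) * U₁)ᴴ *ᵥ (((1 - W * Wᴴ) * U₁) *ᵥ (U₁ᴴ *ᵥ (W *ᵥ (Wᴴ *ᵥ b)))))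
          ≤ σ * vnorm (((1 - W * Wᴴ) * U₁) *ᵥ (U₁ᴴ *ᵥ (W *ᵥ (Wᴴ *ᵥ b)))) :=
            vnorm_conjT_mulVec_le _ hσ0 hσub _
        _ ≤ σ * (σ * vnorm (Wᴴ *ᵥ b)) := mul_le_mul_of_nonneg_left t1 hσ0
    calc vnorm (G⁻¹ *ᵥ (((1 - W * Wᴴ) * U₁)ᴴ *ᵥ (((1 - W * Wᴴ) * U₁) *ᵥ (U₁ᴴ *ᵥ (W *ᵥ (Wᴴ *ᵥ b))))))
        ≤ (c ^ 2)⁻¹ * vnorm (((1 - W * Wᴴ) * U₁)ᴴ *ᵥ (((1 - W * Wᴴ) * U₁) *ᵥ (U₁ᴴ *ᵥ (W *ᵥ (Wᴴ *ᵥ b))))) :=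
          hGinvBound _
      _ ≤ (c ^ 2)⁻¹ * (σ * (σ * vnorm (Wᴴ *ᵥ b))) :=
          mul_le_mul_of_nonneg_left t2 (inv_nonneg.mpr (sq_nonneg c))
  -- combine
  have hD'eq : D' = diagonal fun i => (((S i)⁻¹ : ℝ) : ℂ) := by
    rw [hD'def]; congr 1; funext i; push_cast; ring
  have hmain : vnorm (x - y)
      ≤ α * (σ * vnorm ((1 - W * Wᴴ) *ᵥ b) + (c ^ 2)⁻¹ * (σ * (σ * vnorm (Wᴴ *ᵥ b)))) := by
    rw [hxy2]
    set u1 := (((1 - W * Wᴴ) * U₁)ᴴ * (1 - W * Wᴴ)) *ᵥ b with hu1def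
    set u2 := (G⁻¹ * (((1 - W * Wᴴ) * U₁)ᴴ * (((1 - W * Wᴴ) * U₁) * (U₁ᴴ * (W * Wᴴ))))) *ᵥ b with hu2def
    calc vnorm ((V * D') *ᵥ (u1 - u2)) = vnorm (D' *ᵥ (u1 - u2)) := by
          rw [← mulVec_mulVec, vnorm_mulVec_eq hV]
      _ ≤ α * vnorm (u1 - u2) := by
          rw [hD'eq]
          exact vnorm_diag_mulVec_le _ hα0 (fun i => inv_nonneg.mpr (hS i).le) hα _
      _ ≤ α * (vnorm u1 + vnorm u2) := mul_le_mul_of_nonneg_left (vnorm_sub_le u1 u2) hα0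
      _ ≤ α * (σ * vnorm ((1 - W * Wᴴ) *ᵥ b) + (c ^ 2)⁻¹ * (σ * (σ * vnorm (Wᴴ *ᵥ b)))) :=
          mul_le_mul_of_nonneg_left (add_le_add hu1 hu2) hα0
  have hbpos : 0 < vnorm b := vnorm_pos hb
  have hrhs : α * vnorm b *
        (σ * (vnorm ((1 - W * Wᴴ) *ᵥ b) / vnorm b) + (σ / c) ^ 2 * (vnorm (Wᴴ *ᵥ b) / vnorm b))
      = α * (σ * vnorm ((1 - W * Wᴴ) *ᵥ b) + (c ^ 2)⁻¹ * (σ * (σ * vnorm (Wᴴ *ᵥ b)))) := by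
    have h1 := hbpos.ne'
    have h2 := hcpos.ne'
    field_simp
  exact le_trans hmain (le_of_eq hrhs.symm)
end
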